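/- arXiv:0906.2183 — 5 statements merged into one kernel-verified Lean document; each statement's English description precedes it below -/
import Mathlib

section
/- For every positive integer n, φ(1^n 0^n) = 1. Moreover, if n_1, m_1, n_2, m_2 are positive integers with n_1 + n_2 = m_1 + m_2, then φ(1^{n_1}0^{m_1}1^{n_2}0^{m_2}) = 1 + min{n_1, m_1, n_2, m_2}. -/
/-- A pairing of the positions `Fin N`: a collection of blocks, each of size 2,
with every position in exactly one block. -/
def IsPairing {N : ℕ} (π : Finset (Finset (Fin N))) : Prop :=
  (∀ B ∈ π, B.card = 2) ∧ ∀ i : Fin N, ∃! B, B ∈ π ∧ i ∈ B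

/-- A crossing: blocks `{i₁,i₂}` and `{j₁,j₂}` with `i₁ < j₁ < i₂ < j₂`. -/
def HasCrossing {N : ℕ} (π : Finset (Finset (Fin N))) : Prop :=
  ∃ B ∈ π, ∃ C ∈ π, ∃ i₁ i₂ j₁ j₂ : Fin N,
    i₁ ∈ B ∧ i₂ ∈ B ∧ j₁ ∈ C ∧ j₂ ∈ C ∧ i₁ < j₁ ∧ j₁ < i₂ ∧ i₂ < j₂

/-- A non-crossing `w`-pairing: a non-crossing pairing of the positions of the
bitstring `w` (ones are `true`, zeros are `false`) pairing unequal letters. -/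
def IsNCPairingOn (w : List Bool) (π : Finset (Finset (Fin w.length))) : Prop :=
  IsPairing π ∧ ¬ HasCrossing π ∧
    ∀ B ∈ π, ∀ i ∈ B, ∀ j ∈ B, i ≠ j → w.get i ≠ w.get j

/-- `phi w` is the number of non-crossing `w`-pairings. -/
noncomputable def phi (w : List Bool) : ℕ :=
  Set.ncard {π : Finset (Finset (Fin w.length)) | IsNCPairingOn w π}

/-- The word `1^{n 0} 0^{m 0} 1^{n 1} 0^{m 1} ⋯ 1^{n (r-1)} 0^{m (r-1)}`. -/
def runsF {r : ℕ} (n m : Fin r → ℕ) : List Bool :=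
  (List.finRange r).flatMap fun i => List.replicate (n i) true ++ List.replicate (m i) false

/-- The word `1^{k₁} 0^{k₁} ⋯ 1^{k_r} 0^{k_r}` for `l = [k₁, …, k_r]`. -/
def symWord (l : List ℕ) : List Bool :=
  l.flatMap fun k => List.replicate k true ++ List.replicate k false

/-- The symmetrized pairing function `φ*(n₁,…,n_r) = φ(1^{n₁}0^{n₁}⋯1^{n_r}0^{n_r})`. -/
noncomputable def phiStar (l : List ℕ) : ℕ := phi (symWord l)

/-- `Yval w i` is the lattice-path value `Y_i`. -/
def Yval (w : List Bool) (i : ℕ) : ℤ :=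
  ((w.take i).count true : ℤ) - ((w.take i).count false : ℤ)

/-- The height of position `i` of `w`, relative to the minimum `mY` of the `Y_i`. -/
def heightAt (w : List Bool) (mY : ℤ) (i : Fin w.length) : ℤ :=
  if w.get i then Yval w (i.val + 1) - mY else Yval w (i.val + 1) - mY + 1

/-- `d : Fin r → ℕ` is a Catalan degree sequence of order `r`. -/
def IsCatalanSeq (r : ℕ) (d : Fin r → ℕ) : Prop :=
  (∀ i : ℕ, 1 ≤ i → i ≤ r - 1 →
      (i : ℕ) ≤ ∑ j ∈ Finset.univ.filter (fun j : Fin r => (j : ℕ) < i), d j) ∧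
  ∑ j, d j = r - 1

/-- Sum of the first `j` values of `f`. -/
def prefSum {r : ℕ} (f : Fin r → ℕ) (j : ℕ) : ℕ :=
  ∑ i ∈ Finset.univ.filter (fun i : Fin r => (i : ℕ) < j), f i

/-- `m` is a member of `CF(n)`. -/
def InCF {r : ℕ} (n m : Fin r → ℕ) : Prop :=
  (∀ j : ℕ, 1 ≤ j → j ≤ r - 1 → prefSum m j ≤ prefSum n j) ∧
  (∑ i, m i = ∑ i, n i)

-- generic layer
def pairingOf {N : ℕ} (f : Fin N → Fin N) : Finset (Finset (Fin N)) :=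
  Finset.image (fun i => {i, f i}) Finset.univ

def GoodF (w : List Bool) (f : Fin w.length → Fin w.length) : Prop :=
  Function.Involutive f ∧ (∀ i, f i ≠ i) ∧
  (∀ i j, ¬(i < j ∧ j < f i ∧ f i < f j)) ∧
  (∀ i, w.get (f i) ≠ w.get i)

lemma mem_pairingOf {N : ℕ} (f : Fin N → Fin N) (B : Finset (Fin N)) :
    B ∈ pairingOf f ↔ ∃ i, B = {i, f i} := by
  simp [pairingOf, eq_comm]

lemma block_eq {N : ℕ} {f : Fin N → Fin N} (hinv : Function.Involutive f)
    {i a : Fin N} (ha : i ∈ ({a, f a} : Finset (Fin N))) :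
    ({a, f a} : Finset (Fin N)) = {i, f i} := by
  simp only [Finset.mem_insert, Finset.mem_singleton] at ha
  rcases ha with rfl | rfl
  · rfl
  · rw [hinv a]
    exact Finset.pair_comm _ _

lemma isPairing_pairingOf {N : ℕ} {f : Fin N → Fin N}
    (hinv : Function.Involutive f) (hne : ∀ i, f i ≠ i) :
    IsPairing (pairingOf f) := by
  constructor
  · intro B hB
    rcases (mem_pairingOf f B).1 hB with ⟨i, rfl⟩
    rw [Finset.card_insert_of_notMem (by simp [Ne.symm (hne i)]), Finset.card_singleton]
  · intro i
    refine ⟨{i, f i}, ⟨(mem_pairingOf f _).2 ⟨i, rfl⟩, by simp⟩, ?_⟩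
    rintro B ⟨hB, hiB⟩
    rcases (mem_pairingOf f B).1 hB with ⟨a, rfl⟩
    exact block_eq hinv hiB

lemma goodF_ncPairing {w : List Bool} {f : Fin w.length → Fin w.length}
    (hf : GoodF w f) : IsNCPairingOn w (pairingOf f) := by
  obtain ⟨hinv, hne, hcr, hlet⟩ := hf
  refine ⟨isPairing_pairingOf hinv hne, ?_, ?_⟩
  · rintro ⟨B, hB, C, hC, i₁, i₂, j₁, j₂, hi₁, hi₂, hj₁, hj₂, h1, h2, h3⟩
    rcases (mem_pairingOf f B).1 hB with ⟨a, rfl⟩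
    rcases (mem_pairingOf f C).1 hC with ⟨b, rfl⟩
    have hB2 := block_eq hinv hi₁
    have hC2 := block_eq hinv hj₁
    rw [hB2] at hi₂; rw [hC2] at hj₂
    simp only [Finset.mem_insert, Finset.mem_singleton] at hi₂ hj₂
    have hi2 : i₂ = f i₁ :=
      hi₂.resolve_left (fun h => absurd (h1.trans h2) (by rw [h]; exact lt_irrefl _))
    have hj2 : j₂ = f j₁ :=
      hj₂.resolve_left (fun h => absurd (h2.trans h3) (by rw [h]; exact lt_irrefl _))
    subst hi2 hj2
    exact hcr i₁ j₁ ⟨h1, h2, h3⟩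
  · intro B hB i hi j hj hij
    rcases (mem_pairingOf f B).1 hB with ⟨a, rfl⟩
    have hBi := block_eq hinv hi
    rw [hBi] at hj
    simp only [Finset.mem_insert, Finset.mem_singleton] at hj
    rcases hj with rfl | rfl
    · exact absurd rfl hij
    · exact (hlet i).symm

lemma ncPairing_exists_goodF {w : List Bool} {π : Finset (Finset (Fin w.length))}
    (hπ : IsNCPairingOn w π) : ∃ f, GoodF w f ∧ π = pairingOf f := by
  obtain ⟨⟨hcard, huniq⟩, hnc, hlet⟩ := hπ
  have hex : ∀ i : Fin w.length, ∃ j, j ≠ i ∧ {i, j} ∈ π := by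
    intro i
    obtain ⟨B, ⟨hB, hiB⟩, -⟩ := huniq i
    obtain ⟨a, b, hab, rfl⟩ := Finset.card_eq_two.1 (hcard B hB)
    simp only [Finset.mem_insert, Finset.mem_singleton] at hiB
    rcases hiB with rfl | rfl
    · exact ⟨b, hab.symm, hB⟩
    · exact ⟨a, hab, by rwa [Finset.pair_comm]⟩
  classical
  set f : Fin w.length → Fin w.length := fun i => (hex i).choose with hfdef
  have hf1 : ∀ i, f i ≠ i := fun i => (hex i).choose_spec.1
  have hf2 : ∀ i, {i, f i} ∈ π := fun i => (hex i).choose_spec.2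
  have hblock : ∀ (B) (_ : B ∈ π) (i : Fin w.length), i ∈ B → B = {i, f i} := by
    intro B hB i hiB
    obtain ⟨C, -, hC⟩ := huniq i
    rw [hC B ⟨hB, hiB⟩]
    exact (hC ({i, f i} : Finset (Fin w.length)) ⟨hf2 i, by simp⟩).symm
  have hinv : Function.Involutive f := by
    intro i
    have h1 : ({f i, f (f i)} : Finset (Fin w.length)) = {i, f i} := by
      have := hblock {i, f i} (hf2 i) (f i) (by simp)
      rw [← hblock {f i, f (f i)} (hf2 (f i)) (f i) (by simp), this]
    have : f (f i) ∈ ({i, f i} : Finset (Fin w.length)) := by rw [← h1]; simp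
    simp only [Finset.mem_insert, Finset.mem_singleton] at this
    rcases this with h | h
    · exact h
    · exact absurd h (hf1 (f i))
  have hπeq : π = pairingOf f := by
    ext B
    rw [mem_pairingOf]
    constructor
    · intro hB
      obtain ⟨a, b, hab, rfl⟩ := Finset.card_eq_two.1 (hcard B hB)
      exact ⟨a, hblock _ hB a (by simp)⟩
    · rintro ⟨i, rfl⟩; exact hf2 i
  refine ⟨f, ⟨hinv, hf1, ?_, ?_⟩, hπeq⟩
  · rintro i j ⟨h1, h2, h3⟩
    exact hnc ⟨{i, f i}, hf2 i, {j, f j}, hf2 j, i, f i, j, f j,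
      by simp, by simp, by simp, by simp, h1, h2, h3⟩
  · intro i
    exact hlet {i, f i} (hf2 i) (f i) (by simp) i (by simp) (hf1 i)

lemma pairingOf_inj {w : List Bool} {f g : Fin w.length → Fin w.length}
    (hf : GoodF w f) (hg : GoodF w g) (h : pairingOf f = pairingOf g) : f = g := by
  funext i
  have h1 : {i, g i} ∈ pairingOf f := by rw [h, mem_pairingOf]; exact ⟨i, rfl⟩
  rcases (mem_pairingOf f _).1 h1 with ⟨a, ha⟩
  have hia : i ∈ ({a, f a} : Finset (Fin _)) := by rw [← ha]; simp
  have heq : ({i, g i} : Finset (Fin _)) = {i, f i} := ha.trans (block_eq hf.1 hia)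
  have hgi : g i ∈ ({i, f i} : Finset (Fin _)) := by rw [← heq]; simp
  simp only [Finset.mem_insert, Finset.mem_singleton] at hgi
  rcases hgi with hh | hh
  · exact absurd hh (hg.2.1 i)
  · exact hh.symm

lemma phi_eq_ncard_goodF (w : List Bool) :
    phi w = Set.ncard {f : Fin w.length → Fin w.length | GoodF w f} := by
  rw [phi]
  have : {π : Finset (Finset (Fin w.length)) | IsNCPairingOn w π} =
      pairingOf '' {f | GoodF w f} := by
    ext π
    constructor
    · intro hπ
      obtain ⟨f, hf, rfl⟩ := ncPairing_exists_goodF hπ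
      exact ⟨f, hf, rfl⟩
    · rintro ⟨f, hf, rfl⟩
      exact goodF_ncPairing hf
  rw [this]
  exact Set.ncard_image_of_injOn (fun f hf g hg => pairingOf_inj hf hg)

lemma inside_arc {w : List Bool} {f : Fin w.length → Fin w.length} (hf : GoodF w f)
    {a j : Fin w.length} (h1 : a < j) (h2 : j < f a) : a < f j ∧ f j < f a := by
  obtain ⟨hinv, hne, hcr, -⟩ := hf
  rcases lt_trichotomy (f j) a with h | h | h
  · exfalso
    refine hcr (f j) a ⟨h, ?_, ?_⟩ <;> rw [hinv]
    · exact h1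
    · exact h2
  · exfalso
    have hj : j = f a := by rw [← hinv j, h]
    rw [hj] at h2
    exact lt_irrefl _ h2
  · rcases lt_trichotomy (f j) (f a) with h' | h' | h'
    · exact ⟨h, h'⟩
    · exfalso
      have hj : j = a := hinv.injective h'
      rw [hj] at h1
      exact lt_irrefl _ h1
    · exact absurd ⟨h1, h2, h'⟩ (hcr a j)

lemma opener_le {w : List Bool} {f g : Fin w.length → Fin w.length}
    (hf : GoodF w f) (hg : GoodF w g) (hop : ∀ i, i < f i ↔ i < g i) :
    ∀ (d : ℕ) (i : Fin w.length), i < f i → (f i : ℕ) - (i : ℕ) ≤ d → (f i : ℕ) ≤ (g i : ℕ) := by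
  intro d
  induction d with
  | zero => intro i hi hd; exfalso; have := Fin.lt_def.1 hi; omega
  | succ d ih =>
    intro i hi hd
    have hgi : i < g i := (hop i).1 hi
    by_contra hlt
    push_neg at hlt
    -- g i < f i
    have h1 : g i < f i := Fin.lt_def.2 (by omega)
    set k := g i with hk
    have hik : i < k := hgi
    -- k is a closer for g, hence for f
    have hkg : g k = i := hg.1 i
    have hkcl : ¬ k < g k := by rw [hkg]; exact fun h => absurd (hik.trans h) (lt_irrefl _)
    have hkclf : ¬ k < f k := fun h => hkcl ((hop k).1 h)
    have hfk : f k < k := by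
      rcases lt_trichotomy (f k) k with h | h | h
      · exact h
      · exact absurd h (hf.2.1 k)
      · exact absurd h hkclf
    -- inside lemma for f : arc i -- f i contains k
    have h2 : i < f k ∧ f k < f i := inside_arc hf hik h1
    -- inside lemma for g : arc i -- k contains f k
    have h3 : i < g (f k) ∧ g (f k) < g i := inside_arc hg h2.1 hfk
    -- IH applied at f k
    have hop2 : f k < f (f k) := by rw [hf.1 k]; exact hfk
    have hle : (f (f k) : ℕ) ≤ (g (f k) : ℕ) := by
      apply ih (f k) hop2
      rw [hf.1 k]
      have e1 := Fin.lt_def.1 hik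
      have e2 := Fin.lt_def.1 h2.1
      have e3 := Fin.lt_def.1 h2.2
      have e4 := Fin.lt_def.1 hi
      omega
    rw [hf.1 k] at hle
    have := Fin.lt_def.1 h3.2
    omega

lemma opener_ext {w : List Bool} {f g : Fin w.length → Fin w.length}
    (hf : GoodF w f) (hg : GoodF w g) (hop : ∀ i, i < f i ↔ i < g i) : f = g := by
  have key : ∀ i, i < f i → f i = g i := by
    intro i hi
    have h1 := opener_le hf hg hop ((f i : ℕ) - i) i hi le_rfl
    have h2 := opener_le hg hf (fun i => (hop i).symm) ((g i : ℕ) - i) i ((hop i).1 hi) le_rfl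
    exact Fin.ext (le_antisymm h1 h2)
  funext i
  rcases lt_trichotomy i (f i) with h | h | h
  · exact key i h
  · exact absurd h.symm (hf.2.1 i)
  · -- i is a closer; f i is an opener
    have h1 : f i < f (f i) := by rw [hf.1 i]; exact h
    have h2 := key (f i) h1
    rw [hf.1 i] at h2
    have h3 : g i = g (g (f i)) := by rw [← h2]
    rw [h3, hg.1 (f i)]

def mirror (L : ℕ) : Fin L → Fin L := fun i => ⟨L - 1 - (i : ℕ), by have := i.isLt; omega⟩

lemma part1 (n : ℕ) (hn : 1 ≤ n) :
    phi (List.replicate n true ++ List.replicate n false) = 1 := by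
  set w : List Bool := List.replicate n true ++ List.replicate n false with hw
  have hL : w.length = n + n := by simp [hw]
  have gOne : ∀ i : Fin w.length, w.get i = true ↔ (i : ℕ) < n := by
    intro i
    simp only [hw, List.get_eq_getElem, List.getElem_append, List.getElem_replicate,
      List.length_replicate]
    split_ifs <;> simp <;> omega
  have hmv : ∀ i : Fin w.length, ((mirror w.length i : Fin w.length) : ℕ) = w.length - 1 - i := fun i => rfl
  have hgood : GoodF w (mirror w.length) := by
    refine ⟨?_, ?_, ?_, ?_⟩
    · intro i
      apply Fin.ext
      rw [hmv, hmv]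
      have := i.isLt
      omega
    · intro i h
      have := congrArg Fin.val h
      rw [hmv] at this
      have h2 := i.isLt
      omega
    · rintro i j ⟨h1, h2, h3⟩
      rw [Fin.lt_def] at h1 h2 h3
      rw [hmv] at h2 h3
      rw [hmv] at h3
      have := i.isLt
      have := j.isLt
      omega
    · intro i he
      have hi := gOne i
      have hm := gOne (mirror w.length i)
      rw [he] at hm
      rw [hmv] at hm
      have := i.isLt
      cases hb : w.get i
      · rw [hb] at hi hm
        simp only [Bool.false_eq_true, false_iff] at hi hm
        omega
      · rw [hb] at hi hm
        simp only [true_iff] at hi hm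
        omega
  have huniq : ∀ f, GoodF w f → f = mirror w.length := by
    intro f hf
    apply opener_ext hf hgood
    intro i
    have hi := gOne i
    have hfi := gOne (f i)
    have hlet := hf.2.2.2 i
    have hiv := i.isLt
    have hfiv := (f i).isLt
    rw [Fin.lt_def, Fin.lt_def, hmv]
    constructor
    · intro h
      cases hb : w.get i
      · rw [hb] at hi hlet
        simp only [Bool.false_eq_true, false_iff] at hi
        have : w.get (f i) = true := by
          cases hc : w.get (f i); · rw [hc] at hlet; simp at hlet
          · rfl
        have := hfi.1 this
        omega
      · rw [hb] at hi
        simp only [true_iff] at hi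
        omega
    · intro h
      cases hb : w.get i
      · rw [hb] at hi
        simp only [Bool.false_eq_true, false_iff] at hi
        omega
      · rw [hb] at hi hlet
        simp only [true_iff] at hi
        have : w.get (f i) = false := by
          cases hc : w.get (f i); · rfl
          · rw [hc] at hlet; simp at hlet
        have h2 : ¬ ((f i : ℕ) < n) := by
          intro hh
          rw [hfi.2 hh] at this
          simp at this
        omega
  rw [phi_eq_ncard_goodF]
  have : {f : Fin w.length → Fin w.length | GoodF w f} = {mirror w.length} := by
    ext f
    simp only [Set.mem_setOf_eq, Set.mem_singleton_iff]
    exact ⟨huniq f, fun h => h ▸ hgood⟩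
  rw [this, Set.ncard_singleton]

def FF (n1 m1 n2 m2 t i : ℕ) : ℕ :=
  if i < t then n1+m1+n2+m2-1-i
  else if i < 2*n1 - t then 2*n1-1-i
  else if i < 2*m1 + t then 2*(n1+m1)-1-i
  else if i < n1+m1+n2+m2 - t then 2*(n1+m1+n2)-1-i
  else n1+m1+n2+m2-1-i

section FFlem
variable {n1 m1 n2 m2 t : ℕ} (h1 : 1 ≤ n1) (h2 : 1 ≤ m1) (h3 : 1 ≤ n2) (h4 : 1 ≤ m2)
  (hb : n1 + n2 = m1 + m2) (ht1 : n1 ≤ t + m1) (ht2 : t ≤ n1) (ht3 : t ≤ m2)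

include h1 h2 h3 h4 hb ht1 ht2 ht3

lemma FF_lt {i : ℕ} (hi : i < n1+m1+n2+m2) : FF n1 m1 n2 m2 t i < n1+m1+n2+m2 := by
  simp only [FF]; split_ifs <;> omega

lemma FF_invol {i : ℕ} (hi : i < n1+m1+n2+m2) : FF n1 m1 n2 m2 t (FF n1 m1 n2 m2 t i) = i := by
  simp only [FF]; split_ifs <;> omega

lemma FF_ne {i : ℕ} (hi : i < n1+m1+n2+m2) : FF n1 m1 n2 m2 t i ≠ i := by
  simp only [FF]; split_ifs <;> omega

lemma FF_nest {i j : ℕ} (hi : i < n1+m1+n2+m2) (hj : j < n1+m1+n2+m2)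
    (hij : i < j) (hjf : j < FF n1 m1 n2 m2 t i) :
    FF n1 m1 n2 m2 t j < FF n1 m1 n2 m2 t i := by
  simp only [FF] at *; split_ifs at * <;> omega

lemma FF_opener {i : ℕ} (hi : i < n1+m1+n2+m2) :
    i < FF n1 m1 n2 m2 t i ↔
      (i < n1 ∨ (2*n1 - t ≤ i ∧ i < n1+m1) ∨ (2*m1 + t ≤ i ∧ i < n1+m1+n2)) := by
  simp only [FF]; split_ifs <;> omega

lemma FF_letter {i : ℕ} (hi : i < n1+m1+n2+m2) :
    (i < n1 ∨ (n1+m1 ≤ i ∧ i < n1+m1+n2)) ↔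
      ¬(FF n1 m1 n2 m2 t i < n1 ∨ (n1+m1 ≤ FF n1 m1 n2 m2 t i ∧ FF n1 m1 n2 m2 t i < n1+m1+n2)) := by
  simp only [FF]; split_ifs <;> omega

end FFlem

lemma card_interval (L a b : ℕ) (hbL : b ≤ L) :
    ((Finset.univ : Finset (Fin L)).filter (fun j : Fin L => a ≤ (j : ℕ) ∧ (j : ℕ) < b)).card = b - a := by
  rw [← Nat.card_Ico a b]
  apply Finset.card_bij (fun (j : Fin L) (_ : j ∈ (Finset.univ : Finset (Fin L)).filter
    (fun j : Fin L => a ≤ (j : ℕ) ∧ (j : ℕ) < b)) => (j : ℕ))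
  · intro j hj
    simp only [Finset.mem_filter] at hj
    exact Finset.mem_Ico.2 ⟨hj.2.1, hj.2.2⟩
  · intro j _ j' _ h
    exact Fin.ext h
  · intro k hk
    rw [Finset.mem_Ico] at hk
    exact ⟨⟨k, lt_of_lt_of_le hk.2 hbL⟩, by simp [hk.1, hk.2], rfl⟩

lemma part2 (n1 m1 n2 m2 : ℕ) (h1 : 1 ≤ n1) (h2 : 1 ≤ m1) (h3 : 1 ≤ n2) (h4 : 1 ≤ m2)
    (hb : n1 + n2 = m1 + m2) :
    phi (List.replicate n1 true ++ List.replicate m1 false ++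
         List.replicate n2 true ++ List.replicate m2 false) =
      1 + min (min n1 m1) (min n2 m2) := by
  classical
  set w : List Bool := List.replicate n1 true ++ List.replicate m1 false ++
      List.replicate n2 true ++ List.replicate m2 false with hw
  have hL : w.length = n1+m1+n2+m2 := by simp [hw]; omega
  have gOne : ∀ i : Fin w.length,
      w.get i = true ↔ ((i:ℕ) < n1 ∨ (n1+m1 ≤ (i:ℕ) ∧ (i:ℕ) < n1+m1+n2)) := by
    intro i
    simp only [hw, List.get_eq_getElem, List.getElem_append, List.getElem_replicate,
      List.length_append, List.length_replicate]
    split_ifs <;> simp <;> omega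
  set fT : ℕ → Fin w.length → Fin w.length := fun t i =>
    if h : FF n1 m1 n2 m2 t i < w.length then ⟨FF n1 m1 n2 m2 t i, h⟩ else i with hfTdef
  have hfT : ∀ t, n1 ≤ t + m1 → t ≤ n1 → t ≤ m2 → ∀ i : Fin w.length,
      ((fT t i : Fin w.length) : ℕ) = FF n1 m1 n2 m2 t (i : ℕ) := by
    intro t ht1 ht2 ht3 i
    have hi := i.isLt
    have hFlt := FF_lt h1 h2 h3 h4 hb ht1 ht2 ht3 (i := (i:ℕ)) (by omega)
    simp only [hfTdef]
    rw [dif_pos (by omega)]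
  have hgoodT : ∀ t, n1 ≤ t + m1 → t ≤ n1 → t ≤ m2 → GoodF w (fT t) := by
    intro t ht1 ht2 ht3
    have hv := hfT t ht1 ht2 ht3
    refine ⟨?_, ?_, ?_, ?_⟩
    · intro i
      apply Fin.ext
      rw [hv, hv]
      have hi := i.isLt
      exact FF_invol h1 h2 h3 h4 hb ht1 ht2 ht3 (by omega)
    · intro i hcon
      have := congrArg Fin.val hcon
      rw [hv] at this
      have hi := i.isLt
      exact FF_ne h1 h2 h3 h4 hb ht1 ht2 ht3 (by omega) this
    · rintro i j ⟨hij, hjf, hff⟩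
      rw [Fin.lt_def] at hij hjf hff
      rw [hv] at hjf hff
      rw [hv] at hff
      have hi := i.isLt
      have hj := j.isLt
      have := FF_nest h1 h2 h3 h4 hb ht1 ht2 ht3 (i := (i:ℕ)) (j := (j:ℕ))
        (by omega) (by omega) hij hjf
      omega
    · intro i hcon
      have ha := gOne i
      have hbb := gOne (fT t i)
      rw [hcon] at hbb
      rw [hv] at hbb
      have hi := i.isLt
      have hlet := FF_letter h1 h2 h3 h4 hb ht1 ht2 ht3 (i := (i:ℕ)) (by omega)
      cases hx : w.get i
      · rw [hx] at ha hbb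
        simp only [Bool.false_eq_true, false_iff] at ha hbb
        tauto
      · rw [hx] at ha hbb
        simp only [true_iff] at ha hbb
        tauto
  -- uniqueness
  have huniq : ∀ f : Fin w.length → Fin w.length, GoodF w f →
      ∃ t, (n1 - m1 ≤ t ∧ t ≤ min n1 m2) ∧ fT t = f := by
    intro f hf
    have hflip : ∀ i : Fin w.length,
        (((f i : Fin w.length) : ℕ) < n1 ∨ (n1+m1 ≤ ((f i : Fin w.length):ℕ) ∧ ((f i : Fin w.length):ℕ) < n1+m1+n2)) ↔
        ¬((i:ℕ) < n1 ∨ (n1+m1 ≤ (i:ℕ) ∧ (i:ℕ) < n1+m1+n2)) := by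
      intro i
      have ha := gOne i
      have hbb := gOne (f i)
      have hc := hf.2.2.2 i
      constructor
      · intro hP hQ
        exact hc ((hbb.2 hP).trans (ha.2 hQ).symm)
      · intro hQ
        by_contra hP
        have e1 : w.get i = false := by
          cases hx : w.get i
          · rfl
          · exact absurd (ha.1 hx) hQ
        have e2 : w.get (f i) = false := by
          cases hx : w.get (f i)
          · rfl
          · exact absurd (hbb.1 hx) hP
        rw [e1, e2] at hc
        exact hc rfl
    have hA : ∀ i : Fin w.length, (i:ℕ) < n1 → i < f i := by
      intro i hi
      have h5 := hflip i
      rw [Fin.lt_def]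
      omega
    have hD : ∀ i : Fin w.length, n1+m1+n2 ≤ (i:ℕ) → f i < i := by
      intro i hi
      have h5 := hflip i
      rw [Fin.lt_def]
      omega
    have hCmono : ∀ i j : Fin w.length, n1 ≤ (i:ℕ) → (j:ℕ) < n1+m1 → (i:ℕ) < (j:ℕ) →
        i < f i → j < f j := by
      intro i j hi hj hij hio
      rcases lt_trichotomy j (f j) with h | h | h
      · exact h
      · exact absurd h.symm (hf.2.1 j)
      · exfalso
        have hfl := hflip j
        have hjv := Fin.lt_def.1 h
        have hfj1 : ((f j : Fin w.length):ℕ) < n1 := by omega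
        have hffj : f (f j) = j := hf.1 j
        have harc := inside_arc hf (a := f j) (j := i)
          (Fin.lt_def.2 (by omega)) (by rw [hffj]; exact Fin.lt_def.2 hij)
        rw [hffj] at harc
        have hfi := hflip i
        have h5 := Fin.lt_def.1 harc.2
        have h6 := Fin.lt_def.1 hio
        omega
    have hBmono : ∀ i j : Fin w.length, n1+m1 ≤ (i:ℕ) → (j:ℕ) < n1+m1+n2 → (i:ℕ) < (j:ℕ) →
        f j < j → f i < i := by
      intro i j hi hj hij hjc
      rcases lt_trichotomy (f i) i with h | h | h
      · exact h
      · exact absurd h (hf.2.1 i)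
      · exfalso
        have hfl := hflip j
        have hfi := hflip i
        have hjv := Fin.lt_def.1 hjc
        have hfjlt : ((f j : Fin w.length):ℕ) < n1+m1 := by omega
        have hffj : f (f j) = j := hf.1 j
        have harc := inside_arc hf (a := f j) (j := i)
          (Fin.lt_def.2 (by omega)) (by rw [hffj]; exact Fin.lt_def.2 hij)
        rw [hffj] at harc
        have h5 := Fin.lt_def.1 harc.2
        have h6 := Fin.lt_def.1 h
        omega
    classical
    set CO := Finset.univ.filter
      (fun i : Fin w.length => n1 ≤ (i:ℕ) ∧ (i:ℕ) < n1+m1 ∧ i < f i) with hCOdef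
    set u := CO.card with hu
    set BC := Finset.univ.filter
      (fun i : Fin w.length => n1+m1 ≤ (i:ℕ) ∧ (i:ℕ) < n1+m1+n2 ∧ f i < i) with hBCdef
    have hBCcard : BC.card = u := by
      rw [hu]
      apply Finset.card_bij (fun (i : Fin w.length) (_ : i ∈ BC) => f i)
      · intro i hi
        simp only [hBCdef, Finset.mem_filter, Finset.mem_univ, true_and] at hi
        obtain ⟨ha, hbb, hc⟩ := hi
        have hfl := hflip i
        have hcv := Fin.lt_def.1 hc
        simp only [hCOdef, Finset.mem_filter, Finset.mem_univ, true_and]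
        refine ⟨by omega, by omega, ?_⟩
        have : f (f i) = i := hf.1 i
        rw [this]
        exact hc
      · intro a _ b _ h
        exact hf.1.injective h
      · intro j hj
        simp only [hCOdef, Finset.mem_filter, Finset.mem_univ, true_and] at hj
        obtain ⟨ha, hbb, hc⟩ := hj
        have hfl := hflip j
        have hcv := Fin.lt_def.1 hc
        refine ⟨f j, ?_, hf.1 j⟩
        simp only [hBCdef, Finset.mem_filter, Finset.mem_univ, true_and]
        refine ⟨by omega, by omega, ?_⟩
        have : f (f j) = j := hf.1 j
        rw [this]
        exact hc
    have huLe : u ≤ m1 := by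
      have hsub : CO ⊆ Finset.univ.filter
          (fun j : Fin w.length => n1 ≤ (j:ℕ) ∧ (j:ℕ) < n1+m1) := by
        intro a ha
        simp only [hCOdef, Finset.mem_filter, Finset.mem_univ, true_and] at ha ⊢
        exact ⟨ha.1, ha.2.1⟩
      have := Finset.card_le_card hsub
      rw [card_interval w.length n1 (n1+m1) (by omega)] at this
      omega
    have huLe2 : u ≤ n2 := by
      have hsub : BC ⊆ Finset.univ.filter
          (fun j : Fin w.length => n1+m1 ≤ (j:ℕ) ∧ (j:ℕ) < n1+m1+n2) := by
        intro a ha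
        simp only [hBCdef, Finset.mem_filter, Finset.mem_univ, true_and] at ha ⊢
        exact ⟨ha.1, ha.2.1⟩
      have := Finset.card_le_card hsub
      rw [card_interval w.length (n1+m1) (n1+m1+n2) (by omega)] at this
      omega
    set CC := Finset.univ.filter
      (fun i : Fin w.length => n1 ≤ (i:ℕ) ∧ (i:ℕ) < n1+m1 ∧ f i < i) with hCCdef
    have hCCcard : CC.card = m1 - u := by
      have hdisj : Disjoint CO CC := by
        rw [Finset.disjoint_left]
        intro a ha hbb
        simp only [hCOdef, Finset.mem_filter, Finset.mem_univ, true_and] at ha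
        simp only [hCCdef, Finset.mem_filter, Finset.mem_univ, true_and] at hbb
        exact absurd hbb.2.2 (lt_asymm ha.2.2)
      have hunion : CO ∪ CC = Finset.univ.filter
          (fun j : Fin w.length => n1 ≤ (j:ℕ) ∧ (j:ℕ) < n1+m1) := by
        ext a
        simp only [Finset.mem_union, hCOdef, hCCdef, Finset.mem_filter, Finset.mem_univ, true_and]
        constructor
        · rintro (⟨x, y, z⟩ | ⟨x, y, z⟩) <;> exact ⟨x, y⟩
        · rintro ⟨x, y⟩
          rcases lt_trichotomy a (f a) with h | h | h
          · exact Or.inl ⟨x, y, h⟩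
          · exact absurd h.symm (hf.2.1 a)
          · exact Or.inr ⟨x, y, h⟩
      have hcu := Finset.card_union_of_disjoint hdisj
      rw [hunion, card_interval w.length n1 (n1+m1) (by omega)] at hcu
      omega
    have hCCle : CC.card ≤ n1 := by
      have hle : CC.card ≤ (Finset.univ.filter
          (fun j : Fin w.length => 0 ≤ (j:ℕ) ∧ (j:ℕ) < n1)).card := by
        apply Finset.card_le_card_of_injOn f
        · intro a ha
          simp only [hCCdef, Finset.mem_coe, Finset.mem_filter, Finset.mem_univ, true_and] at ha
          simp only [Finset.mem_coe, Finset.mem_filter, Finset.mem_univ, true_and]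
          have hfl := hflip a
          have hav := Fin.lt_def.1 ha.2.2
          exact ⟨Nat.zero_le _, by omega⟩
        · intro a _ b _ h
          exact hf.1.injective h
      rw [card_interval w.length 0 n1 (by omega)] at hle
      omega
    have hmu : m1 - u ≤ n1 := hCCcard ▸ hCCle
    have hCOb : ∀ i : Fin w.length, n1 ≤ (i:ℕ) → (i:ℕ) < n1+m1 →
        (i < f i ↔ n1+m1-u ≤ (i:ℕ)) := by
      intro i hi1 hi2
      constructor
      · intro hio
        by_contra hcon
        push_neg at hcon
        have hsub : Finset.univ.filter
            (fun j : Fin w.length => (i:ℕ) ≤ (j:ℕ) ∧ (j:ℕ) < n1+m1) ⊆ CO := by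
          intro j hj
          simp only [Finset.mem_filter, Finset.mem_univ, true_and] at hj
          simp only [hCOdef, Finset.mem_filter, Finset.mem_univ, true_and]
          rcases eq_or_lt_of_le hj.1 with heq | hlt
          · have hji : j = i := Fin.ext heq.symm
            rw [hji]
            exact ⟨hi1, hi2, hio⟩
          · exact ⟨by omega, hj.2, hCmono i j hi1 hj.2 hlt hio⟩
        have hcc := Finset.card_le_card hsub
        rw [card_interval w.length (i:ℕ) (n1+m1) (by omega)] at hcc
        omega
      · intro hge
        rcases lt_trichotomy i (f i) with h | h | h
        · exact h
        · exact absurd h.symm (hf.2.1 i)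
        · exfalso
          have hsub : Finset.univ.filter
              (fun j : Fin w.length => n1 ≤ (j:ℕ) ∧ (j:ℕ) < (i:ℕ)+1) ⊆ CC := by
            intro j hj
            simp only [Finset.mem_filter, Finset.mem_univ, true_and] at hj
            simp only [hCCdef, Finset.mem_filter, Finset.mem_univ, true_and]
            rcases eq_or_lt_of_le (show (j:ℕ) ≤ (i:ℕ) by omega) with heq | hlt
            · have hji : j = i := Fin.ext heq
              rw [hji]
              exact ⟨hi1, hi2, h⟩
            · refine ⟨hj.1, by omega, ?_⟩
              rcases lt_trichotomy j (f j) with h2 | h2 | h2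
              · exact absurd (hCmono j i hj.1 hi2 hlt h2) (lt_asymm h)
              · exact absurd h2.symm (hf.2.1 j)
              · exact h2
          have hcc := Finset.card_le_card hsub
          rw [card_interval w.length n1 ((i:ℕ)+1) (by omega)] at hcc
          omega
    have hBOb : ∀ i : Fin w.length, n1+m1 ≤ (i:ℕ) → (i:ℕ) < n1+m1+n2 →
        (i < f i ↔ n1+m1+u ≤ (i:ℕ)) := by
      intro i hi1 hi2
      constructor
      · intro hio
        by_contra hcon
        push_neg at hcon
        have hsub : BC ⊆ Finset.univ.filter
            (fun j : Fin w.length => n1+m1 ≤ (j:ℕ) ∧ (j:ℕ) < (i:ℕ)) := by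
          intro j hj
          simp only [hBCdef, Finset.mem_filter, Finset.mem_univ, true_and] at hj
          simp only [Finset.mem_filter, Finset.mem_univ, true_and]
          refine ⟨hj.1, ?_⟩
          rcases lt_trichotomy ((j:ℕ)) ((i:ℕ)) with h2 | h2 | h2
          · exact h2
          · exact absurd (show j = i from Fin.ext h2) (by
              intro hji
              rw [hji] at hj
              exact absurd hj.2.2 (lt_asymm hio))
          · exact absurd (hBmono i j hi1 hj.2.1 h2 hj.2.2) (lt_asymm hio)
        have hcc := Finset.card_le_card hsub
        rw [card_interval w.length (n1+m1) ((i:ℕ)) (by omega)] at hcc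
        omega
      · intro hge
        rcases lt_trichotomy i (f i) with h | h | h
        · exact h
        · exact absurd h.symm (hf.2.1 i)
        · exfalso
          have hsub : Finset.univ.filter
              (fun j : Fin w.length => n1+m1 ≤ (j:ℕ) ∧ (j:ℕ) < (i:ℕ)+1) ⊆ BC := by
            intro j hj
            simp only [Finset.mem_filter, Finset.mem_univ, true_and] at hj
            simp only [hBCdef, Finset.mem_filter, Finset.mem_univ, true_and]
            rcases eq_or_lt_of_le (show (j:ℕ) ≤ (i:ℕ) by omega) with heq | hlt
            · have hji : j = i := Fin.ext heq
              rw [hji]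
              exact ⟨hi1, hi2, h⟩
            · exact ⟨hj.1, by omega, hBmono j i hj.1 hi2 hlt h⟩
          have hcc := Finset.card_le_card hsub
          rw [card_interval w.length (n1+m1) ((i:ℕ)+1) (by omega)] at hcc
          omega
    set t := n1 + u - m1 with htdef
    have ht1 : n1 ≤ t + m1 := by omega
    have ht2 : t ≤ n1 := by omega
    have ht3 : t ≤ m2 := by omega
    refine ⟨t, ⟨by omega, by omega⟩, ?_⟩
    have hop : ∀ i : Fin w.length, i < f i ↔ i < fT t i := by
      intro i
      have hiv := i.isLt
      have hv := hfT t ht1 ht2 ht3 i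
      have hopF := FF_opener h1 h2 h3 h4 hb ht1 ht2 ht3 (i := (i:ℕ)) (by omega)
      have hR : (i < fT t i) ↔ ((i:ℕ) < n1 ∨ (2*n1 - t ≤ (i:ℕ) ∧ (i:ℕ) < n1+m1) ∨
          (2*m1 + t ≤ (i:ℕ) ∧ (i:ℕ) < n1+m1+n2)) := by
        rw [Fin.lt_def, hv]
        exact hopF
      rw [hR]
      rcases lt_or_ge ((i:ℕ)) n1 with hr | hr
      · exact ⟨fun _ => by omega, fun _ => hA i hr⟩
      rcases lt_or_ge ((i:ℕ)) (n1+m1) with hr2 | hr2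
      · rw [hCOb i hr hr2]
        omega
      rcases lt_or_ge ((i:ℕ)) (n1+m1+n2) with hr3 | hr3
      · rw [hBOb i hr2 hr3]
        omega
      · have h5 := hD i hr3
        exact ⟨fun h6 => absurd h6 (lt_asymm h5), fun h6 => absurd h6 (by omega)⟩
    exact (opener_ext hf (hgoodT t ht1 ht2 ht3) hop).symm

  -- conclusion
  have hset : {f : Fin w.length → Fin w.length | GoodF w f} =
      ↑((Finset.Icc (n1 - m1) (min n1 m2)).image fT) := by
    ext f
    simp only [Set.mem_setOf_eq, Finset.coe_image, Set.mem_image, Finset.mem_coe,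
      Finset.mem_Icc]
    constructor
    · intro hf
      obtain ⟨t, ⟨ha, hbb⟩, hc⟩ := huniq f hf
      exact ⟨t, ⟨ha, hbb⟩, hc⟩
    · rintro ⟨t, ⟨ha, hbb⟩, rfl⟩
      exact hgoodT t (by omega) (by omega) (by omega)
  rw [phi_eq_ncard_goodF, hset, Set.ncard_coe_finset]
  rw [Finset.card_image_of_injOn, Nat.card_Icc]
  · omega
  · intro t1 ht1 t2 ht2 heq
    simp only [Finset.coe_Icc, Set.mem_Icc] at ht1 ht2
    by_contra hne
    have key : ∀ a b : ℕ, (n1 - m1 ≤ a ∧ a ≤ min n1 m2) → (n1 - m1 ≤ b ∧ b ≤ min n1 m2) →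
        a < b → fT a = fT b → False := by
      intro a b hA hB hab hE
      have hp : 2*n1 - b < w.length := by omega
      have := congrArg (fun g => ((g ⟨2*n1 - b, hp⟩ : Fin w.length) : ℕ)) hE
      rw [hfT a (by omega) (by omega) (by omega), hfT b (by omega) (by omega) (by omega)] at this
      simp only [FF] at this
      split_ifs at this <;> omega
    rcases lt_trichotomy t1 t2 with h | h | h
    · exact key t1 t2 ht1 ht2 h heq
    · exact hne h
    · exact key t2 t1 ht2 ht1 h heq.symm


/-- `φ(1^n 0^n) = 1`, and if `n₁ + n₂ = m₁ + m₂` then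
`φ(1^{n₁}0^{m₁}1^{n₂}0^{m₂}) = 1 + min{n₁, m₁, n₂, m₂}`. -/
theorem stmt2 :
    (∀ n : ℕ, 1 ≤ n → phi (List.replicate n true ++ List.replicate n false) = 1) ∧
    (∀ n1 m1 n2 m2 : ℕ, 1 ≤ n1 → 1 ≤ m1 → 1 ≤ n2 → 1 ≤ m2 → n1 + n2 = m1 + m2 →
      phi (List.replicate n1 true ++ List.replicate m1 false ++
           List.replicate n2 true ++ List.replicate m2 false) =
        1 + min (min n1 m1) (min n2 m2)) :=
  ⟨fun n hn => part1 n hn, fun n1 m1 n2 m2 h1 h2 h3 h4 hb => part2 n1 m1 n2 m2 h1 h2 h3 h4 hb⟩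
end

section
/- Let S = s_1 s_2 ⋯ s_{2n} be a bitstring and 1 ≤ k ≤ 2n. Then φ(S) = φ(Rot_k(S)) = φ(Refl(S)) = φ(1−S), where Rot_k(S) := s_k s_{k+1} ⋯ s_{2n} s_1 s_2 ⋯ s_{k−1}, Refl(S) := s_{2n} ⋯ s_2 s_1, and 1−S is the word whose i-th letter is 1 − s_i. -/
def Phi {N M : ℕ} (e : Fin N ≃ Fin M) (π : Finset (Finset (Fin N))) :
    Finset (Finset (Fin M)) :=
  π.image fun B => B.image e

lemma Phi_symm_Phi {N M : ℕ} (e : Fin N ≃ Fin M) (π : Finset (Finset (Fin N))) :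
    Phi e.symm (Phi e π) = π := by
  unfold Phi
  rw [Finset.image_image]
  have h : ((fun B : Finset (Fin M) => B.image e.symm) ∘ fun B : Finset (Fin N) => B.image e)
      = id := by
    funext B
    simp [Function.comp, Finset.image_image]
  rw [h, Finset.image_id]

lemma Phi_injective {N M : ℕ} (e : Fin N ≃ Fin M) : Function.Injective (Phi e) := by
  intro π π' h
  have := congrArg (Phi e.symm) h
  rwa [Phi_symm_Phi, Phi_symm_Phi] at this

lemma mem_Phi {N M : ℕ} {e : Fin N ≃ Fin M} {π : Finset (Finset (Fin N))}
    {B' : Finset (Fin M)} (h : B' ∈ Phi e π) : ∃ B ∈ π, B.image e = B' := by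
  simpa [Phi] using h

lemma isPairing_Phi {N M : ℕ} (e : Fin N ≃ Fin M) {π : Finset (Finset (Fin N))}
    (hπ : IsPairing π) : IsPairing (Phi e π) := by
  constructor
  · intro B' hB'
    obtain ⟨B, hB, rfl⟩ := mem_Phi hB'
    rw [Finset.card_image_of_injective _ e.injective]
    exact hπ.1 B hB
  · intro i
    obtain ⟨B, ⟨hB, hiB⟩, huniq⟩ := hπ.2 (e.symm i)
    refine ⟨B.image e, ⟨Finset.mem_image_of_mem _ hB, ?_⟩, ?_⟩
    · have : e (e.symm i) ∈ B.image e := Finset.mem_image_of_mem _ hiB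
      simpa using this
    · intro C' ⟨hC', hiC'⟩
      obtain ⟨C, hC, rfl⟩ := mem_Phi hC'
      obtain ⟨x, hxC, hxe⟩ := Finset.mem_image.mp hiC'
      have hx : x = e.symm i := by
        have := congrArg e.symm hxe; simpa using this
      subst hx
      rw [huniq C ⟨hC, hxC⟩]

lemma cross_from {N : ℕ} {π : Finset (Finset (Fin N))} {B C : Finset (Fin N)}
    (hB : B ∈ π) (hC : C ∈ π) {a b c d : Fin N}
    (ha : a ∈ B) (hb : b ∈ B) (hc : c ∈ C) (hd : d ∈ C)
    (h1 : a < c) (h2 : c < b) (h3 : b < d) : HasCrossing π :=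
  ⟨B, hB, C, hC, a, b, c, d, ha, hb, hc, hd, h1, h2, h3⟩

-- pull back a crossing along a strictly monotone equiv
lemma hasCrossing_of_Phi_mono {N M : ℕ} (e : Fin N ≃ Fin M)
    (hmono : ∀ x y : Fin N, x < y → e x < e y)
    {π : Finset (Finset (Fin N))} (h : HasCrossing (Phi e π)) : HasCrossing π := by
  obtain ⟨B', hB', C', hC', i₁, i₂, j₁, j₂, hi₁, hi₂, hj₁, hj₂, h1, h2, h3⟩ := h
  obtain ⟨B, hB, rfl⟩ := mem_Phi hB'
  obtain ⟨C, hC, rfl⟩ := mem_Phi hC'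
  obtain ⟨a, ha, rfl⟩ := Finset.mem_image.mp hi₁
  obtain ⟨b, hb, rfl⟩ := Finset.mem_image.mp hi₂
  obtain ⟨c, hc, rfl⟩ := Finset.mem_image.mp hj₁
  obtain ⟨d, hd, rfl⟩ := Finset.mem_image.mp hj₂
  have inv : ∀ x y : Fin N, e x < e y → x < y := by
    intro x y hxy
    rcases lt_trichotomy x y with h | h | h
    · exact h
    · subst h; exact absurd hxy (lt_irrefl _)
    · exact absurd (hmono _ _ h) (not_lt.mpr (le_of_lt hxy))
  exact cross_from hB hC ha hb hc hd (inv _ _ h1) (inv _ _ h2) (inv _ _ h3)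

-- pull back a crossing along a strictly antitone equiv
lemma hasCrossing_of_Phi_anti {N M : ℕ} (e : Fin N ≃ Fin M)
    (hanti : ∀ x y : Fin N, x < y → e y < e x)
    {π : Finset (Finset (Fin N))} (h : HasCrossing (Phi e π)) : HasCrossing π := by
  obtain ⟨B', hB', C', hC', i₁, i₂, j₁, j₂, hi₁, hi₂, hj₁, hj₂, h1, h2, h3⟩ := h
  obtain ⟨B, hB, rfl⟩ := mem_Phi hB'
  obtain ⟨C, hC, rfl⟩ := mem_Phi hC'
  obtain ⟨a, ha, rfl⟩ := Finset.mem_image.mp hi₁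
  obtain ⟨b, hb, rfl⟩ := Finset.mem_image.mp hi₂
  obtain ⟨c, hc, rfl⟩ := Finset.mem_image.mp hj₁
  obtain ⟨d, hd, rfl⟩ := Finset.mem_image.mp hj₂
  have inv : ∀ x y : Fin N, e x < e y → y < x := by
    intro x y hxy
    rcases lt_trichotomy x y with h | h | h
    · exact absurd (hanti _ _ h) (not_lt.mpr (le_of_lt hxy))
    · subst h; exact absurd hxy (lt_irrefl _)
    · exact h
  -- e a < e c < e b < e d, so d < b < c < a; crossing with roles C,B : d < b < c < a
  exact cross_from hC hB hd hc hb ha (inv _ _ h3) (inv _ _ h2) (inv _ _ h1)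

-- pull back a crossing along a rotation
lemma hasCrossing_of_Phi_rot {N M : ℕ} (e : Fin N ≃ Fin M) (s : ℕ) (hs : s < N) (hMN : M = N)
    (hval : ∀ x : Fin M, ((e.symm x : Fin N) : ℕ) = ((x : ℕ) + s) % N)
    {π : Finset (Finset (Fin N))} (h : HasCrossing (Phi e π)) : HasCrossing π := by
  obtain ⟨B', hB', C', hC', i₁, i₂, j₁, j₂, hi₁, hi₂, hj₁, hj₂, h1, h2, h3⟩ := h
  obtain ⟨B, hB, rfl⟩ := mem_Phi hB'
  obtain ⟨C, hC, rfl⟩ := mem_Phi hC'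
  obtain ⟨a, ha, hae⟩ := Finset.mem_image.mp hi₁
  obtain ⟨b, hb, hbe⟩ := Finset.mem_image.mp hi₂
  obtain ⟨c, hc, hce⟩ := Finset.mem_image.mp hj₁
  obtain ⟨d, hd, hde⟩ := Finset.mem_image.mp hj₂
  have hva : (a : ℕ) = ((i₁ : ℕ) + s) % N := by
    rw [← hval i₁, ← hae]; simp
  have hvb : (b : ℕ) = ((i₂ : ℕ) + s) % N := by
    rw [← hval i₂, ← hbe]; simp
  have hvc : (c : ℕ) = ((j₁ : ℕ) + s) % N := by
    rw [← hval j₁, ← hce]; simp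
  have hvd : (d : ℕ) = ((j₂ : ℕ) + s) % N := by
    rw [← hval j₂, ← hde]; simp
  have hmod : ∀ x : ℕ, x < N → (x + s) % N = if x + s < N then x + s else x + s - N := by
    intro x hx
    split
    · exact Nat.mod_eq_of_lt ‹_›
    · rw [Nat.mod_eq_sub_mod (by omega)]
      exact Nat.mod_eq_of_lt (by omega)
  have lt1 : (i₁ : ℕ) < (j₁ : ℕ) := h1
  have lt2 : (j₁ : ℕ) < (i₂ : ℕ) := h2
  have lt3 : (i₂ : ℕ) < (j₂ : ℕ) := h3
  have bi₁ : (i₁ : ℕ) < N := by have := i₁.isLt; omega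
  have bj₁ : (j₁ : ℕ) < N := by have := j₁.isLt; omega
  have bi₂ : (i₂ : ℕ) < N := by have := i₂.isLt; omega
  have bj₂ : (j₂ : ℕ) < N := by have := j₂.isLt; omega
  rw [hmod _ bi₁] at hva
  rw [hmod _ bi₂] at hvb
  rw [hmod _ bj₁] at hvc
  rw [hmod _ bj₂] at hvd
  by_cases w1 : (i₁ : ℕ) + s < N <;> by_cases w2 : (j₁ : ℕ) + s < N <;>
    by_cases w3 : (i₂ : ℕ) + s < N <;> by_cases w4 : (j₂ : ℕ) + s < N <;>
    simp only [if_pos, if_neg, w1, w2, w3, w4, if_true, if_false] at hva hvb hvc hvd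
  -- feasible cases (wrap set is an upper set): TTTT, TTTF, TTFF, TFFF, FFFF
  all_goals first
    | (exact cross_from hB hC ha hb hc hd
        (by rw [Fin.lt_def]; omega) (by rw [Fin.lt_def]; omega) (by rw [Fin.lt_def]; omega))
    | (exact cross_from hC hB hd hc ha hb
        (by rw [Fin.lt_def]; omega) (by rw [Fin.lt_def]; omega) (by rw [Fin.lt_def]; omega))
    | (exact cross_from hB hC hb ha hd hc
        (by rw [Fin.lt_def]; omega) (by rw [Fin.lt_def]; omega) (by rw [Fin.lt_def]; omega))
    | (exact cross_from hC hB hc hd hb ha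
        (by rw [Fin.lt_def]; omega) (by rw [Fin.lt_def]; omega) (by rw [Fin.lt_def]; omega))
    | omega

-- main transfer lemma
lemma phi_le (w w' : List Bool) (e : Fin w.length ≃ Fin w'.length)
    (hget : ∀ i j : Fin w.length, w.get i ≠ w.get j → w'.get (e i) ≠ w'.get (e j))
    (hcross : ∀ π : Finset (Finset (Fin w.length)),
      HasCrossing (Phi e π) → HasCrossing π) :
    phi w ≤ phi w' := by
  have hsub : (Phi e) '' {π | IsNCPairingOn w π} ⊆ {π | IsNCPairingOn w' π} := by
    rintro _ ⟨π, hπ, rfl⟩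
    obtain ⟨hp, hnc, hlet⟩ := hπ
    refine ⟨isPairing_Phi e hp, fun hcr => hnc (hcross π hcr), ?_⟩
    intro B' hB' i hi j hj hij
    obtain ⟨B, hB, rfl⟩ := mem_Phi hB'
    obtain ⟨a, ha, rfl⟩ := Finset.mem_image.mp hi
    obtain ⟨b, hb, rfl⟩ := Finset.mem_image.mp hj
    have hab : a ≠ b := fun h => hij (by rw [h])
    exact hget a b (hlet B hB a ha b hb hab)
  calc phi w = Set.ncard ((Phi e) '' {π | IsNCPairingOn w π}) :=
        (Set.ncard_image_of_injective _ (Phi_injective e)).symm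
    _ ≤ phi w' := Set.ncard_le_ncard hsub (Set.toFinite _)

-- the rotation equiv
def rotEquiv (N s : ℕ) (h1 : 0 < s) (h2 : s < N) : Fin N ≃ Fin N where
  toFun x := ⟨((x : ℕ) + (N - s)) % N, Nat.mod_lt _ (by omega)⟩
  invFun x := ⟨((x : ℕ) + s) % N, Nat.mod_lt _ (by omega)⟩
  left_inv x := by
    ext
    simp only [Nat.mod_add_mod]
    have : (x : ℕ) + (N - s) + s = (x : ℕ) + N := by omega
    rw [this, Nat.add_mod_right, Nat.mod_eq_of_lt x.isLt]
  right_inv x := by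
    ext
    simp only [Nat.mod_add_mod]
    have : (x : ℕ) + s + (N - s) = (x : ℕ) + N := by omega
    rw [this, Nat.add_mod_right, Nat.mod_eq_of_lt x.isLt]

lemma phi_eq (w w' : List Bool) (e : Fin w.length ≃ Fin w'.length)
    (hget : ∀ i j : Fin w.length, w.get i ≠ w.get j ↔ w'.get (e i) ≠ w'.get (e j))
    (hcross : ∀ π : Finset (Finset (Fin w.length)),
      HasCrossing ((π.image fun B => B.image e)) → HasCrossing π)
    (hcross' : ∀ π : Finset (Finset (Fin w'.length)),
      HasCrossing ((π.image fun B => B.image e.symm)) → HasCrossing π) :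
    phi w = phi w' := by
  refine le_antisymm (phi_le w w' e (fun i j => (hget i j).mp) hcross)
    (phi_le w' w e.symm (fun i j h => ?_) hcross')
  have := (hget (e.symm i) (e.symm j)).mpr
  simp only [Equiv.apply_symm_apply] at this
  exact this h

-- rotated word getElem
lemma getElem_rot (w : List Bool) (s : ℕ) (hs : s ≤ w.length) (j : ℕ)
    (hj : j < (w.drop s ++ w.take s).length) (hj' : (j + s) % w.length < w.length) :
    (w.drop s ++ w.take s)[j] = w[(j + s) % w.length] := by
  have hlen : (w.drop s ++ w.take s).length = w.length := by simp; omega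
  rw [hlen] at hj
  by_cases h : j < w.length - s
  · rw [List.getElem_append_left (by simp; omega), List.getElem_drop]
    congr 1
    rw [Nat.mod_eq_of_lt (by omega)]
    omega
  · rw [List.getElem_append_right (by simp; omega), List.getElem_take]
    congr 1
    rw [Nat.mod_eq_sub_mod (by omega), Nat.mod_eq_of_lt (by omega)]
    simp
    omega

lemma rot_phi (w : List Bool) (s : ℕ) (h1 : 0 < s) (h2 : s < w.length) :
    phi w = phi (w.drop s ++ w.take s) := by
  set w' := w.drop s ++ w.take s with hw'
  have hlen : w.length = w'.length := by simp [hw']; omega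
  have hN : 0 < w.length := by omega
  let e : Fin w.length ≃ Fin w'.length :=
    (rotEquiv w.length s h1 h2).trans (finCongr hlen)
  have hval : ∀ x : Fin w'.length, ((e.symm x : Fin w.length) : ℕ) = ((x : ℕ) + s) % w.length := by
    intro x; rfl
  have hval' : ∀ x : Fin w.length, ((e x : Fin w'.length) : ℕ) =
      ((x : ℕ) + (w.length - s)) % w.length := by
    intro x; rfl
  have hget : ∀ i : Fin w.length, w'.get (e i) = w.get i := by
    intro i
    have hlt : ((e i : ℕ) + s) % w.length < w.length := Nat.mod_lt _ hN
    rw [List.get_eq_getElem, List.get_eq_getElem]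
    rw [getElem_rot w s (le_of_lt h2) _ (by exact (e i).isLt) hlt]
    congr 1
    rw [hval' i, Nat.mod_add_mod]
    have : (i : ℕ) + (w.length - s) + s = (i : ℕ) + w.length := by omega
    rw [this, Nat.add_mod_right, Nat.mod_eq_of_lt i.isLt]
  refine phi_eq w w' e (fun i j => by rw [hget, hget]) ?_ ?_
  · intro π h
    exact hasCrossing_of_Phi_rot e s h2 hlen.symm hval h
  · intro π h
    refine hasCrossing_of_Phi_rot e.symm (w.length - s) (by omega) hlen ?_ h
    intro x
    rw [Equiv.symm_symm, hval' x, ← hlen]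

lemma refl_phi (w : List Bool) : phi w = phi w.reverse := by
  have hlen : w.length = w.reverse.length := List.length_reverse.symm
  let e : Fin w.length ≃ Fin w.reverse.length := Fin.revPerm.trans (finCongr hlen)
  have hval : ∀ i : Fin w.length, ((e i : Fin w.reverse.length) : ℕ) =
      w.length - 1 - (i : ℕ) := by
    intro i
    show ((Fin.rev i : Fin w.length) : ℕ) = _
    rw [Fin.val_rev]
    omega
  have hget : ∀ i : Fin w.length, w.reverse.get (e i) = w.get i := by
    intro i
    rw [List.get_eq_getElem, List.get_eq_getElem, List.getElem_reverse]
    congr 1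
    rw [hval]
    have := i.isLt
    omega
  have hanti : ∀ x y : Fin w.length, x < y → e y < e x := by
    intro x y hxy
    rw [Fin.lt_def] at hxy ⊢
    rw [hval, hval]
    have := y.isLt
    omega
  refine phi_eq w w.reverse e (fun i j => by rw [hget, hget]) ?_ ?_
  · intro π h; exact hasCrossing_of_Phi_anti e hanti h
  · intro π h
    refine hasCrossing_of_Phi_anti e.symm (fun x y hxy => ?_) h
    rcases lt_trichotomy (e.symm y) (e.symm x) with h' | h' | h'
    · exact h'
    · exfalso; rw [← Equiv.apply_symm_apply e x, ← Equiv.apply_symm_apply e y, h'] at hxy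
      exact lt_irrefl _ hxy
    · exfalso
      have := hanti _ _ h'
      simp only [Equiv.apply_symm_apply] at this
      exact lt_irrefl _ (hxy.trans this)

lemma compl_phi (w : List Bool) : phi w = phi (w.map fun b => !b) := by
  have hlen : w.length = (w.map fun b => !b).length := (List.length_map _).symm
  let e : Fin w.length ≃ Fin (w.map fun b => !b).length := finCongr hlen
  have hget : ∀ i : Fin w.length, (w.map fun b => !b).get (e i) = !(w.get i) := by
    intro i
    rw [List.get_eq_getElem, List.get_eq_getElem, List.getElem_map]
    rfl
  refine phi_eq w _ e (fun i j => ?_) ?_ ?_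
  · rw [hget, hget]
    constructor
    · intro h h'; exact h (by simpa using congrArg (fun b => !b) h')
    · intro h h'; exact h (by rw [h'])
  · intro π h
    exact hasCrossing_of_Phi_mono e (fun x y hxy => by
      rw [Fin.lt_def] at hxy ⊢; simpa [e] using hxy) h
  · intro π h
    exact hasCrossing_of_Phi_mono e.symm (fun x y hxy => by
      rw [Fin.lt_def] at hxy ⊢; simpa [e] using hxy) h

/-- `φ(S) = φ(Rot_k(S)) = φ(Refl(S)) = φ(1 − S)`. -/
theorem stmt4 (n : ℕ) (w : List Bool) (hw : w.length = 2 * n)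
    (k : ℕ) (hk1 : 1 ≤ k) (hk2 : k ≤ 2 * n) :
    phi w = phi (w.drop (k - 1) ++ w.take (k - 1)) ∧
    phi w = phi w.reverse ∧
    phi w = phi (w.map fun b => !b) := by
  refine ⟨?_, refl_phi w, compl_phi w⟩
  by_cases hk : k = 1
  · subst hk
    simp
  · exact rot_phi w (k - 1) (by omega) (by omega)
end

section
/- Let S = s_1 ⋯ s_{2n} be a bitstring, let π be a non-crossing S-pairing, and let {i,j} ∈ π. Then h_i = h_j, where h_i denotes the height of position i in S. -/
lemma Yval_succ (w : List Bool) (m : ℕ) (hm : m < w.length) :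
    Yval w (m + 1) = Yval w m + (if w.get ⟨m, hm⟩ then 1 else -1) := by
  have h1 : w.take (m+1) = w.take m ++ [w.get ⟨m, hm⟩] := by
    rw [List.take_succ]
    congr 1
    simp [List.getElem?_eq_getElem hm, List.get_eq_getElem]
  unfold Yval
  rw [h1, List.count_append, List.count_append]
  cases hw : w.get ⟨m, hm⟩ <;> simp [hw] <;> ring

lemma Yval_eq_sum (w : List Bool) (b : ℕ) (hb : b ≤ w.length) :
    Yval w b = ∑ k ∈ Finset.univ.filter (fun k : Fin w.length => k.val < b),
      (if w.get k then (1:ℤ) else -1) := by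
  induction b with
  | zero => simp [Yval]
  | succ m ih =>
    have hm : m < w.length := hb
    rw [Yval_succ w m hm, ih (le_of_lt hm)]
    have he : Finset.univ.filter (fun k : Fin w.length => k.val < m + 1)
        = insert ⟨m, hm⟩ (Finset.univ.filter (fun k : Fin w.length => k.val < m)) := by
      ext k
      simp [Fin.ext_iff]
      omega
    rw [he, Finset.sum_insert (by simp)]
    ring

lemma stmt5_aux (w : List Bool) (mY : ℤ)
    (π : Finset (Finset (Fin w.length))) (hπ : IsNCPairingOn w π)
    (B : Finset (Fin w.length)) (hB : B ∈ π)
    (i j : Fin w.length) (hi : i ∈ B) (hj : j ∈ B) (hij : i < j) :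
    heightAt w mY i = heightAt w mY j := by
  classical
  obtain ⟨⟨hcard, huniq⟩, hnc, hne⟩ := hπ
  have hblock : ∀ (k : Fin w.length) (C1 C2 : Finset (Fin w.length)), C1 ∈ π → C2 ∈ π →
      k ∈ C1 → k ∈ C2 → C1 = C2 := by
    intro k C1 C2 h1 h2 hk1 hk2
    obtain ⟨C, -, hC⟩ := huniq k
    rw [hC C1 ⟨h1, hk1⟩, hC C2 ⟨h2, hk2⟩]
  have hpart : ∀ k : Fin w.length, ∃ p : Fin w.length, p ≠ k ∧ ∃ C, C ∈ π ∧ k ∈ C ∧ p ∈ C ∧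
      ∀ x ∈ C, x = k ∨ x = p := by
    intro k
    obtain ⟨C, ⟨hCπ, hkC⟩, -⟩ := huniq k
    obtain ⟨a, b, hab, hCe⟩ := Finset.card_eq_two.mp (hcard C hCπ)
    subst hCe
    rcases Finset.mem_insert.mp hkC with h | h
    · refine ⟨b, by rw [← h] at hab; exact fun hb => hab hb.symm, _, hCπ, hkC, by simp, ?_⟩
      intro x hx
      rcases Finset.mem_insert.mp hx with h' | h'
      · left; rw [h', h]
      · right; exact Finset.mem_singleton.mp h'
    · have hkb : k = b := Finset.mem_singleton.mp h
      refine ⟨a, by rw [hkb]; exact hab, _, hCπ, hkC, by simp, ?_⟩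
      intro x hx
      rcases Finset.mem_insert.mp hx with h' | h'
      · right; exact h'
      · left; rw [Finset.mem_singleton.mp h', hkb]
  choose f hfne C hCπ hkC hfC hCelts using hpart
  have hfw : ∀ k, w.get (f k) ≠ w.get k :=
    fun k => hne (C k) (hCπ k) (f k) (hfC k) k (hkC k) (hfne k)
  have hinvol : ∀ k, f (f k) = k := by
    intro k
    have hCC : C (f k) = C k := hblock (f k) _ _ (hCπ (f k)) (hCπ k) (hkC (f k)) (hfC k)
    rcases hCelts k (f (f k)) (hCC ▸ hfC (f k)) with h | h
    · exact h
    · exact absurd h (hfne (f k))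
  have hijne : i ≠ j := ne_of_lt hij
  have hBij : B = {i, j} := by
    refine (Finset.eq_of_subset_of_card_le ?_ ?_).symm
    · intro x hx
      rcases Finset.mem_insert.mp hx with h | h
      · rwa [h]
      · rw [Finset.mem_singleton.mp h]; exact hj
    · rw [hcard B hB, Finset.card_pair hijne]
  have hinterval : ∀ k : Fin w.length, i < k → k < j → i < f k ∧ f k < j := by
    intro k h1 h2
    have hknotB : k ∉ B := by
      rw [hBij]
      intro hk
      rcases Finset.mem_insert.mp hk with h | h
      · exact absurd h (ne_of_gt h1)
      · exact absurd (Finset.mem_singleton.mp h) (ne_of_lt h2)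
    have hfki : f k ≠ i := by
      intro h
      have : C k = B := hblock i _ _ (hCπ k) hB (h ▸ hfC k) hi
      exact hknotB (this ▸ hkC k)
    have hfkj : f k ≠ j := by
      intro h
      have : C k = B := hblock j _ _ (hCπ k) hB (h ▸ hfC k) hj
      exact hknotB (this ▸ hkC k)
    constructor
    · rcases lt_trichotomy (f k) i with h | h | h
      · exact absurd ⟨C k, hCπ k, B, hB, f k, k, i, j, hfC k, hkC k, hi, hj, h, h1, h2⟩ hnc
      · exact absurd h hfki
      · exact h
    · rcases lt_trichotomy (f k) j with h | h | h
      · exact h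
      · exact absurd h hfkj
      · exact absurd ⟨B, hB, C k, hCπ k, i, j, k, f k, hi, hj, hkC k, hfC k, h1, h2, h⟩ hnc
  set T : Finset (Fin w.length) := Finset.univ.filter (fun k => i < k ∧ k < j) with hT
  have hcards : (T.filter (fun k => w.get k = true)).card
      = (T.filter (fun k => w.get k = false)).card := by
    apply Finset.card_bij (fun k _ => f k)
    · intro k hk
      simp only [hT, Finset.mem_filter, Finset.mem_univ, true_and] at hk ⊢
      obtain ⟨⟨h1, h2⟩, h3⟩ := hk
      obtain ⟨h4, h5⟩ := hinterval k h1 h2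
      refine ⟨⟨h4, h5⟩, ?_⟩
      have := hfw k
      rw [h3] at this
      simpa using this
    · intro k1 hk1 k2 hk2 h
      have := congrArg f h
      rwa [hinvol, hinvol] at this
    · intro q hq
      simp only [hT, Finset.mem_filter, Finset.mem_univ, true_and] at hq
      obtain ⟨⟨h1, h2⟩, h3⟩ := hq
      obtain ⟨h4, h5⟩ := hinterval q h1 h2
      refine ⟨f q, ?_, hinvol q⟩
      simp only [hT, Finset.mem_filter, Finset.mem_univ, true_and]
      refine ⟨⟨h4, h5⟩, ?_⟩
      have := hfw q
      rw [h3] at this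
      simpa using this
  have hsum0 : ∑ k ∈ T, (if w.get k then (1:ℤ) else -1) = 0 := by
    rw [← Finset.sum_filter_add_sum_filter_not T (fun k => w.get k = true)]
    have e1 : ∑ k ∈ T.filter (fun k => w.get k = true), (if w.get k then (1:ℤ) else -1)
        = (T.filter (fun k => w.get k = true)).card := by
      rw [Finset.sum_congr rfl (fun k hk => ?_), Finset.sum_const, nsmul_eq_mul, mul_one]
      rw [if_pos (Finset.mem_filter.mp hk).2]
    have e2 : ∑ k ∈ T.filter (fun k => ¬ w.get k = true), (if w.get k then (1:ℤ) else -1)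
        = -(T.filter (fun k => ¬ w.get k = true)).card := by
      rw [Finset.sum_congr rfl (fun k hk => ?_), Finset.sum_const, nsmul_eq_mul, mul_neg_one]
      rw [if_neg (Finset.mem_filter.mp hk).2]
    rw [e1, e2]
    have e3 : T.filter (fun k => ¬ w.get k = true) = T.filter (fun k => w.get k = false) := by
      apply Finset.filter_congr
      intro k _
      simp
    rw [e3, hcards]
    ring
  have hYeq : Yval w j.val = Yval w (i.val + 1) := by
    have hj1 : (j : ℕ) ≤ w.length := le_of_lt j.isLt
    have hi1 : (i : ℕ) + 1 ≤ w.length := i.isLt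
    rw [Yval_eq_sum w j.val hj1, Yval_eq_sum w (i.val + 1) hi1]
    have hsub : Finset.univ.filter (fun k : Fin w.length => k.val < i.val + 1)
        ⊆ Finset.univ.filter (fun k : Fin w.length => k.val < j.val) := by
      intro k hk
      simp only [Finset.mem_filter, Finset.mem_univ, true_and] at hk ⊢
      have : (i : ℕ) < j := hij
      omega
    have hdiff : Finset.univ.filter (fun k : Fin w.length => k.val < j.val)
        \ Finset.univ.filter (fun k : Fin w.length => k.val < i.val + 1) = T := by
      ext k
      simp only [hT, Finset.mem_sdiff, Finset.mem_filter, Finset.mem_univ, true_and,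
        Fin.lt_def]
      omega
    have := Finset.sum_sdiff_eq_sub
      (f := fun k : Fin w.length => (if w.get k then (1:ℤ) else -1)) hsub
    rw [hdiff, hsum0] at this
    linarith
  have hwij : w.get i ≠ w.get j := hne B hB i hi j hj hijne
  have hYj : Yval w (j.val + 1) = Yval w j.val + (if w.get j then 1 else -1) := by
    have := Yval_succ w j.val j.isLt
    simpa using this
  cases hgi : w.get i with
  | true =>
    have hgj : w.get j = false := by
      cases hgj : w.get j
      · rfl
      · rw [hgi, hgj] at hwij; exact absurd rfl hwij
    rw [heightAt, heightAt, if_pos hgi, if_neg (by rw [hgj]; simp),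
      hYj, if_neg (by rw [hgj]; simp), hYeq]
    ring
  | false =>
    have hgj : w.get j = true := by
      cases hgj : w.get j
      · rw [hgi, hgj] at hwij; exact absurd rfl hwij
      · rfl
    rw [heightAt, heightAt, if_neg (by rw [hgi]; simp), if_pos hgj,
      hYj, if_pos hgj, hYeq]
    ring

/-- If `π` is a non-crossing `w`-pairing and `{i,j} ∈ π`, then
the heights of positions `i` and `j` agree (`mY` is the minimum of the `Y_i`). -/
theorem stmt5 (w : List Bool) (mY : ℤ)
    (hm : IsLeast {y : ℤ | ∃ i : Fin w.length, Yval w (i.val + 1) = y} mY)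
    (π : Finset (Finset (Fin w.length))) (hπ : IsNCPairingOn w π)
    (B : Finset (Fin w.length)) (hB : B ∈ π)
    (i j : Fin w.length) (hi : i ∈ B) (hj : j ∈ B) :
    heightAt w mY i = heightAt w mY j := by
  rcases lt_trichotomy i j with h | h | h
  · exact stmt5_aux w mY π hπ B hB i j hi hj h
  · rw [h]
  · exact (stmt5_aux w mY π hπ B hB j i hj hi h).symm
end

section
/- Let r ≥ 1 and let n_1,…,n_r be positive integers. Then the number of r-tuples (m_1,…,m_r) of nonnegative integers satisfying m_1+⋯+m_j ≤ n_1+⋯+n_j for all 1 ≤ j ≤ r−1 and m_1+⋯+m_r = n_1+⋯+n_r equals Σ_{(d_1,…,d_r) ∈ D_r} Π_{i=1}^r C(n_i + 1, d_i). -/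
namespace Stmt17

open Finset

attribute [local instance] Classical.propDecidable

def pS (f : ℕ → ℕ) (j : ℕ) : ℕ := ∑ i ∈ Finset.range j, f i

def ext {r : ℕ} (f : Fin r → ℕ) : ℕ → ℕ := fun l => if h : l < r then f ⟨l, h⟩ else 0

lemma pS_succ (f : ℕ → ℕ) (j : ℕ) : pS f (j + 1) = pS f j + f j :=
  Finset.sum_range_succ f j

lemma pS_zero (f : ℕ → ℕ) : pS f 0 = 0 := rfl

lemma pS_mono (f : ℕ → ℕ) {a b : ℕ} (h : a ≤ b) : pS f a ≤ pS f b :=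
  Finset.sum_le_sum_of_subset (Finset.range_subset_range.2 h)

lemma pS_congr {f g : ℕ → ℕ} {s : ℕ} (h : ∀ i < s, f i = g i) : pS f s = pS g s :=
  Finset.sum_congr rfl (fun i hi => h i (Finset.mem_range.1 hi))

lemma pS_le_of_le {f g : ℕ → ℕ} {s : ℕ} (h : ∀ i < s, f i ≤ g i) : pS f s ≤ pS g s :=
  Finset.sum_le_sum (fun i hi => h i (Finset.mem_range.1 hi))

lemma pS_eq_zero {f : ℕ → ℕ} {s : ℕ} (h : ∀ i < s, f i = 0) : pS f s = 0 :=
  Finset.sum_eq_zero (fun i hi => h i (Finset.mem_range.1 hi))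

lemma pS_eq_of_zero (f : ℕ → ℕ) {a b : ℕ} (hab : a ≤ b)
    (h : ∀ j, a ≤ j → j < b → f j = 0) : pS f b = pS f a := by
  induction b, hab using Nat.le_induction with
  | base => rfl
  | succ b hb ih =>
      rw [pS_succ, h b hb (by omega), add_zero]
      exact ih (fun j hj hj' => h j hj (by omega))

lemma ext_lt {r : ℕ} (f : Fin r → ℕ) {l : ℕ} (h : l < r) : ext f l = f ⟨l, h⟩ := dif_pos h

lemma ext_ge {r : ℕ} (f : Fin r → ℕ) {l : ℕ} (h : r ≤ l) : ext f l = 0 := dif_neg (by omega)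

lemma ext_apply {r : ℕ} (f : Fin r → ℕ) (i : Fin r) : ext f i.val = f i := by
  rw [ext_lt f i.isLt]

lemma prefSum_eq_pS {r : ℕ} (f : Fin r → ℕ) (j : ℕ) : prefSum f j = pS (ext f) j := by
  have h1 : pS (ext f) j = ∑ i ∈ (range j).filter (fun i => i < r), ext f i := by
    rw [pS, ← Finset.sum_filter_add_sum_filter_not (range j) (fun i => i < r)]
    have h2 : ∑ i ∈ (range j).filter (fun i => ¬ i < r), ext f i = 0 :=
      Finset.sum_eq_zero (fun i hi => ext_ge f (by simpa using (Finset.mem_filter.1 hi).2))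
    rw [h2, add_zero]
  rw [prefSum, h1]
  refine Finset.sum_bij' (fun a _ => (a : Fin r).val) (fun b hb => ⟨b, (Finset.mem_filter.1 hb).2⟩)
    ?_ ?_ ?_ ?_ ?_
  · intro a ha
    simp only [Finset.mem_filter, Finset.mem_range]
    exact ⟨by simpa using (Finset.mem_filter.1 ha).2, a.isLt⟩
  · intro b hb
    simp only [Finset.mem_filter, Finset.mem_univ, true_and]
    exact (Finset.mem_filter.1 hb).1 |> Finset.mem_range.1
  · intro a ha; exact Fin.eta a a.isLt
  · intro b hb; rfl
  · intro a ha; exact (ext_apply f a).symm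

lemma sum_univ_eq_pS {r : ℕ} (f : Fin r → ℕ) : ∑ i, f i = pS (ext f) r := by
  rw [pS, ← Fin.sum_univ_eq_sum_range (ext f) r]
  exact Finset.sum_congr rfl (fun i _ => (ext_apply f i).symm)

noncomputable def CFset (r : ℕ) (n : Fin r → ℕ) : Finset (Fin r → ℕ) :=
  (Finset.Nat.antidiagonalTuple r (∑ i, n i)).filter
    (fun m => ∀ j ∈ Finset.Icc 1 (r - 1), prefSum m j ≤ prefSum n j)

noncomputable def Dset (r : ℕ) : Finset (Fin r → ℕ) :=
  (Finset.Nat.antidiagonalTuple r (r - 1)).filter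
    (fun d => ∀ i ∈ Finset.Icc 1 (r - 1), i ≤ prefSum d i)

lemma mem_CFset_iff_InCF {r : ℕ} {n m : Fin r → ℕ} : m ∈ CFset r n ↔ InCF n m := by
  unfold CFset InCF
  simp only [Finset.mem_filter, Finset.Nat.mem_antidiagonalTuple, Finset.mem_Icc, and_imp]
  tauto

lemma mem_Dset_iff_Cat {r : ℕ} {d : Fin r → ℕ} : d ∈ Dset r ↔ IsCatalanSeq r d := by
  unfold Dset IsCatalanSeq
  simp only [Finset.mem_filter, Finset.Nat.mem_antidiagonalTuple, Finset.mem_Icc, and_imp]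
  constructor
  · rintro ⟨h1, h2⟩; exact ⟨fun i hi hi' => h2 i hi hi', h1⟩
  · rintro ⟨h1, h2⟩; exact ⟨h2, fun i hi hi' => h1 i hi hi'⟩

lemma mem_CFset {r : ℕ} {n m : Fin r → ℕ} :
    m ∈ CFset r n ↔ ((∀ j, 1 ≤ j → j ≤ r - 1 → pS (ext m) j ≤ pS (ext n) j) ∧
      pS (ext m) r = pS (ext n) r) := by
  rw [mem_CFset_iff_InCF]
  unfold InCF
  rw [sum_univ_eq_pS, sum_univ_eq_pS]
  simp_rw [prefSum_eq_pS]

lemma mem_Dset {r : ℕ} {d : Fin r → ℕ} :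
    d ∈ Dset r ↔ ((∀ i, 1 ≤ i → i ≤ r - 1 → i ≤ pS (ext d) i) ∧ pS (ext d) r = r - 1) := by
  rw [mem_Dset_iff_Cat]
  unfold IsCatalanSeq
  rw [sum_univ_eq_pS]
  constructor
  · rintro ⟨h1, h2⟩
    exact ⟨fun i hi hi' => by rw [← prefSum_eq_pS]; exact h1 i hi hi', h2⟩
  · rintro ⟨h1, h2⟩
    exact ⟨fun i hi hi' => by rw [show (∑ j ∈ Finset.univ.filter (fun j : Fin r => (j : ℕ) < i), d j) = prefSum d i from rfl, prefSum_eq_pS]; exact h1 i hi hi', h2⟩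


lemma Dset_last {r : ℕ} (hr : 1 ≤ r) {d : Fin r → ℕ} (hd : d ∈ Dset r) :
    ext d (r - 1) = 0 := by
  obtain ⟨t, rfl⟩ : ∃ t, r = t + 1 := ⟨r - 1, by omega⟩
  obtain ⟨h1, h2⟩ := mem_Dset.1 hd
  rw [pS_succ] at h2
  rcases Nat.eq_zero_or_pos t with ht | ht
  · subst ht
    rw [pS_zero] at h2
    show ext d 0 = 0
    omega
  · have := h1 t (by omega) (by omega)
    simp only [Nat.add_sub_cancel] at h2 ⊢
    omega

lemma W_eq {r : ℕ} (n d : Fin r → ℕ) :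
    ∏ i, (n i + 1).choose (d i) = ∏ l ∈ range r, (ext n l + 1).choose (ext d l) := by
  rw [← Fin.prod_univ_eq_prod_range (fun l => (ext n l + 1).choose (ext d l)) r]
  exact Finset.prod_congr rfl (fun i _ => by rw [ext_apply, ext_apply])

lemma pS_le_card {D : ℕ → ℕ} {t : ℕ} (h : ∀ l < t, D l ≤ 1) : pS D t ≤ t := by
  induction t with
  | zero => simp [pS_zero]
  | succ t ih =>
      rw [pS_succ]
      have := h t (by omega)
      have := ih (fun l hl => h l (by omega))
      omega

lemma all_ones {D : ℕ → ℕ} {t : ℕ} (h : ∀ l < t, D l ≤ 1) (h2 : pS D t = t) :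
    ∀ l < t, D l = 1 := by
  induction t with
  | zero => omega
  | succ t ih =>
      rw [pS_succ] at h2
      have hDt := h t (by omega)
      have hle : pS D t ≤ t := pS_le_card (fun l hl => h l (by omega))
      have hpt : pS D t = t := by omega
      have := ih (fun l hl => h l (by omega)) hpt
      intro l hl
      rcases Nat.lt_or_ge l t with h' | h'
      · exact this l h'
      · have hlt : l = t := by omega
        rw [hlt]; omega

lemma card_CFset_allzero {t : ℕ} (n : Fin (t+1) → ℕ) (hz : ∀ j, j < t → ext n j = 0) :
    (CFset (t+1) n).card = 1 := by
  have hpn : ∀ s, s ≤ t → pS (ext n) s = 0 :=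
    fun s hs => pS_eq_zero (fun i hi => hz i (by omega))
  set m₀ : Fin (t+1) → ℕ := fun l => if l.val = t then ext n t else 0 with hm₀
  have hext : ∀ l, ext m₀ l = if l = t then ext n t else 0 := by
    intro l
    rcases Nat.lt_or_ge l (t+1) with h | h
    · rw [ext_lt m₀ h]
    · rw [ext_ge m₀ h, if_neg (by omega)]
  have hm₀mem : m₀ ∈ CFset (t+1) n := by
    rw [mem_CFset]
    constructor
    · intro j hj hj'
      have : pS (ext m₀) j = 0 := pS_eq_zero (fun i hi => by
        rw [hext]; exact if_neg (by omega))
      omega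
    · rw [pS_succ, pS_succ, hpn t le_rfl, hext t,
        pS_eq_zero (fun i hi => by rw [hext]; exact if_neg (by omega))]
      simp
  rw [Finset.card_eq_one]
  refine ⟨m₀, ?_⟩
  apply Finset.eq_singleton_iff_unique_mem.2
  refine ⟨hm₀mem, ?_⟩
  intro m hm
  obtain ⟨h1, h2⟩ := mem_CFset.1 hm
  have hzero : ∀ l, l < t → ext m l = 0 := by
    intro l hl
    have h3 := h1 (l+1) (by omega) (by omega)
    have h4 : pS (ext n) (l+1) = 0 := hpn (l+1) (by omega)
    have h5 : pS (ext m) l + ext m l = pS (ext m) (l+1) := (pS_succ _ _).symm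
    omega
  have hpm : pS (ext m) t = 0 := pS_eq_zero hzero
  have hlast : ext m t = ext n t := by
    rw [pS_succ, pS_succ, hpm, hpn t le_rfl] at h2
    omega
  funext l
  rcases Nat.lt_or_ge l.val t with h | h
  · have := hzero l.val h
    rw [ext_apply] at this
    simp only [hm₀]
    rw [if_neg (by omega), this]
  · have hlv : l.val = t := by omega
    have : ext m l.val = ext n t := by rw [hlv]; exact hlast
    rw [ext_apply] at this
    simp only [hm₀]
    rw [if_pos hlv, this]

lemma sum_Dset_allzero {t : ℕ} (n : Fin (t+1) → ℕ) (hz : ∀ j, j < t → ext n j = 0) :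
    ∑ d ∈ Dset (t+1), ∏ i, (n i + 1).choose (d i) = 1 := by
  set d₀ : Fin (t+1) → ℕ := fun l => if l.val < t then 1 else 0 with hd₀
  have hext : ∀ l, ext d₀ l = if l < t then 1 else 0 := by
    intro l
    rcases Nat.lt_or_ge l (t+1) with h | h
    · rw [ext_lt d₀ h]
    · rw [ext_ge d₀ h, if_neg (by omega)]
  have hpS : ∀ s, s ≤ t → pS (ext d₀) s = s := by
    intro s hs
    induction s with
    | zero => exact pS_zero _
    | succ s ih =>
        rw [pS_succ, ih (by omega), hext s, if_pos (by omega)]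
  have hd₀mem : d₀ ∈ Dset (t+1) := by
    rw [mem_Dset]
    refine ⟨fun i hi hi' => by rw [hpS i (by omega)], ?_⟩
    rw [pS_succ, hpS t le_rfl, hext t, if_neg (by omega)]
    simp
  rw [Finset.sum_eq_single_of_mem d₀ hd₀mem]
  · apply Finset.prod_eq_one
    intro i _
    rcases Nat.lt_or_ge i.val t with h | h
    · have hni : n i = 0 := by rw [← ext_apply n i]; exact hz i.val h
      have hdi : d₀ i = 1 := by simp only [hd₀]; rw [if_pos h]
      rw [hni, hdi]
      simp
    · have hdi : d₀ i = 0 := by simp only [hd₀]; rw [if_neg (by omega)]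
      rw [hdi]; exact Nat.choose_zero_right _
  · intro d hd hne
    obtain ⟨h1, h2⟩ := mem_Dset.1 hd
    have hdt : ext d t = 0 := by simpa using Dset_last (by omega) hd
    have hpdt : pS (ext d) t = t := by
      rw [pS_succ] at h2; simp only [Nat.add_sub_cancel] at h2; omega
    by_cases hbig : ∃ l, l < t ∧ 2 ≤ ext d l
    · obtain ⟨l, hl, h2l⟩ := hbig
      refine Finset.prod_eq_zero (Finset.mem_univ (⟨l, by omega⟩ : Fin (t+1))) ?_
      have hnl : n (⟨l, by omega⟩ : Fin (t+1)) = 0 := by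
        have := hz l hl
        rwa [ext_lt n (show l < t + 1 by omega)] at this
      have hdl : 2 ≤ d (⟨l, by omega⟩ : Fin (t+1)) := by
        have := h2l
        rwa [ext_lt d (show l < t + 1 by omega)] at this
      rw [hnl]
      exact Nat.choose_eq_zero_of_lt (by omega)
    · exfalso
      push_neg at hbig
      have hones := all_ones (fun l hl => by have := hbig l hl; omega) hpdt
      apply hne
      funext l
      rcases Nat.lt_or_ge l.val t with h | h
      · have := hones l.val h
        rw [ext_apply] at this
        simp only [hd₀]; rw [if_pos h, this]
      · have hlv : l.val = t := by omega
        have : ext d l.val = 0 := by rw [hlv]; exact hdt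
        rw [ext_apply] at this
        simp only [hd₀]; rw [if_neg (by omega), this]


section StepL

variable {t k : ℕ}

lemma stepL (ht : 1 ≤ t) (n : Fin (t+1) → ℕ) (hk : k < t)
    (hnk : 1 ≤ ext n k) (hz : ∀ j, k < j → j < t → ext n j = 0) :
    (CFset (t+1) n).card
      = (CFset (t+1) (fun l => if l.val = k then n l - 1 else n l)).card
        + (CFset t (fun l => ext n l.val)).card := by
  set nm : Fin (t+1) → ℕ := fun l => if l.val = k then n l - 1 else n l with hnm
  set n' : Fin t → ℕ := fun l => ext n l.val with hn'
  have hextnm : ∀ l, ext nm l = if l = k then ext n l - 1 else ext n l := by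
    intro l
    rcases Nat.lt_or_ge l (t+1) with h | h
    · rw [ext_lt nm h, ext_lt n h, hnm]
    · rw [ext_ge nm h, ext_ge n h]
      simp
  have hextn' : ∀ l, l < t → ext n' l = ext n l := by
    intro l h
    rw [ext_lt n' h]
  have hconst : ∀ s, k + 1 ≤ s → s ≤ t → pS (ext n) s = pS (ext n) t := by
    intro s h1 h2
    exact (pS_eq_of_zero (ext n) h2 (fun j hj hj' => hz j (by omega) hj')).symm
  have hpSnm : ∀ s, s ≤ k → pS (ext nm) s = pS (ext n) s := by
    intro s hs
    exact pS_congr (fun i hi => by rw [hextnm i, if_neg (by omega)])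
  have hpSnm2 : ∀ s, k + 1 ≤ s → s ≤ t + 1 → pS (ext nm) s + 1 = pS (ext n) s := by
    intro s hs
    induction s, hs using Nat.le_induction with
    | base =>
        intro _
        rw [pS_succ, pS_succ, hpSnm k le_rfl, hextnm k, if_pos rfl]
        omega
    | succ s hs ih =>
        intro h'
        rw [pS_succ, pS_succ, hextnm s, if_neg (by omega)]
        have := ih (by omega)
        omega
  have hA1 : 1 ≤ pS (ext n) t := by
    have h1 : pS (ext n) k + ext n k = pS (ext n) (k+1) := (pS_succ _ _).symm
    have h2 : pS (ext n) (k+1) ≤ pS (ext n) t := pS_mono _ (by omega)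
    omega
  have hsplit := Finset.card_filter_add_card_filter_not
    (s := CFset (t+1) n) (p := fun m => pS (ext m) t = pS (ext n) t)
  have hP : ((CFset (t+1) n).filter (fun m => pS (ext m) t = pS (ext n) t)).card
      = (CFset t n').card := by
    refine Finset.card_bij' (fun m _ => fun l : Fin t => ext m l.val)
      (fun g _ => fun l : Fin (t+1) => if h : l.val < t then g ⟨l.val, h⟩ else ext n t)
      ?_ ?_ ?_ ?_
    · intro m hm
      obtain ⟨hmC, hmP⟩ := Finset.mem_filter.1 hm
      obtain ⟨h1, h2⟩ := mem_CFset.1 hmC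
      have hini : ∀ s, s ≤ t → pS (ext (fun l : Fin t => ext m l.val)) s = pS (ext m) s :=
        fun s hs => pS_congr (fun i hi => by rw [ext_lt _ (show i < t by omega)])
      have hn's : ∀ s, s ≤ t → pS (ext n') s = pS (ext n) s :=
        fun s hs => pS_congr (fun i hi => hextn' i (by omega))
      rw [mem_CFset]
      constructor
      · intro j hj hj'
        rw [hini j (by omega), hn's j (by omega)]
        exact h1 j hj (by omega)
      · rw [hini t le_rfl, hn's t le_rfl]
        exact hmP
    · intro g hg
      obtain ⟨h1, h2⟩ := mem_CFset.1 hg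
      have hextm : ∀ l, l < t →
          ext (fun l : Fin (t+1) => if h : l.val < t then g ⟨l.val, h⟩ else ext n t) l
            = ext g l := by
        intro l h
        rw [ext_lt _ (show l < t + 1 by omega), ext_lt g h]
        exact dif_pos h
      have hextmt :
          ext (fun l : Fin (t+1) => if h : l.val < t then g ⟨l.val, h⟩ else ext n t) t
            = ext n t := by
        rw [ext_lt _ (show t < t + 1 by omega)]
        exact dif_neg (show ¬ t < t by omega)
      have hn's : ∀ s, s ≤ t → pS (ext n') s = pS (ext n) s :=
        fun s hs => pS_congr (fun i hi => hextn' i (by omega))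
      have hms : ∀ s, s ≤ t →
          pS (ext (fun l : Fin (t+1) => if h : l.val < t then g ⟨l.val, h⟩ else ext n t)) s
            = pS (ext g) s :=
        fun s hs => pS_congr (fun i hi => hextm i (by omega))
      have hPm : pS (ext (fun l : Fin (t+1) => if h : l.val < t then g ⟨l.val, h⟩ else ext n t)) t
          = pS (ext n) t := by
        rw [hms t le_rfl, h2, hn's t le_rfl]
      refine Finset.mem_filter.2 ⟨mem_CFset.2 ⟨?_, ?_⟩, hPm⟩
      · intro j hj hj'
        rcases Nat.lt_or_ge j t with hjt | hjt
        · rw [hms j (by omega)]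
          calc pS (ext g) j ≤ pS (ext n') j := h1 j hj (by omega)
            _ = pS (ext n) j := hn's j (by omega)
        · have hjt' : j = t := by omega
          rw [hjt']
          exact le_of_eq hPm
      · rw [pS_succ, pS_succ, hPm, hextmt]
    · intro m hm
      dsimp only
      obtain ⟨hmC, hmP⟩ := Finset.mem_filter.1 hm
      obtain ⟨h1, h2⟩ := mem_CFset.1 hmC
      have hmt : ext m t = ext n t := by
        rw [pS_succ, pS_succ] at h2
        omega
      funext l
      by_cases h : l.val < t
      · simp only [dif_pos h]
        exact ext_apply m l
      · simp only [dif_neg h]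
        have hlv : l.val = t := by omega
        rw [← ext_apply m l, hlv, hmt]
    · intro g hg
      funext l
      rw [ext_lt _ (show l.val < t + 1 by omega)]
      exact dif_pos l.isLt
  have hQ : ((CFset (t+1) n).filter (fun m => ¬ pS (ext m) t = pS (ext n) t)).card
      = (CFset (t+1) nm).card := by
    have hext_dec : ∀ (m : Fin (t+1) → ℕ) (l : ℕ),
        ext (fun l : Fin (t+1) => if l.val = t then m l - 1 else m l) l
          = if l = t then ext m l - 1 else ext m l := by
      intro m l
      rcases Nat.lt_or_ge l (t+1) with h | h
      · rw [ext_lt _ h, ext_lt m h]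
      · rw [ext_ge _ h, ext_ge m h, if_neg (by omega)]
    have hext_inc : ∀ (m : Fin (t+1) → ℕ) (l : ℕ),
        ext (fun l : Fin (t+1) => if l.val = t then m l + 1 else m l) l
          = if l = t then ext m l + 1 else ext m l := by
      intro m l
      rcases Nat.lt_or_ge l (t+1) with h | h
      · rw [ext_lt _ h, ext_lt m h]
      · rw [ext_ge _ h, ext_ge m h, if_neg (by omega)]
    have hnm_le : ∀ s, pS (ext nm) s ≤ pS (ext n) s := by
      intro s
      apply pS_le_of_le
      intro i _
      rw [hextnm i]
      by_cases hik : i = k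
      · rw [if_pos hik]
        exact Nat.sub_le _ _
      · rw [if_neg hik]
    refine Finset.card_bij'
      (fun m _ => fun l : Fin (t+1) => if l.val = t then m l - 1 else m l)
      (fun m _ => fun l : Fin (t+1) => if l.val = t then m l + 1 else m l)
      ?_ ?_ ?_ ?_
    · intro m hm
      obtain ⟨hmC, hmP⟩ := Finset.mem_filter.1 hm
      obtain ⟨h1, h2⟩ := mem_CFset.1 hmC
      have hle : pS (ext m) t < pS (ext n) t := by
        have := h1 t (by omega) (by omega)
        omega
      have hmt : ext n t + 1 ≤ ext m t := by
        rw [pS_succ, pS_succ] at h2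
        omega
      have hpSd : ∀ s, s ≤ t → pS (ext (fun l : Fin (t+1) => if l.val = t then m l - 1 else m l)) s
          = pS (ext m) s :=
        fun s hs => pS_congr (fun i hi => by rw [hext_dec m i, if_neg (by omega)])
      rw [mem_CFset]
      constructor
      · intro j hj hj'
        rw [hpSd j (by omega)]
        rcases Nat.lt_or_ge k j with hkj | hkj
        · have e1 := hpSnm2 j (by omega) (by omega)
          have e2 := hconst j (by omega) (by omega)
          have e3 : pS (ext m) j ≤ pS (ext m) t := pS_mono _ (by omega)
          omega
        · have e1 := hpSnm j hkj
          have := h1 j hj hj'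
          omega
      · rw [pS_succ, pS_succ, hpSd t le_rfl, hext_dec m t, if_pos rfl]
        have e1 := hpSnm2 (t+1) (by omega) (by omega)
        rw [pS_succ, pS_succ] at e1 h2
        omega
    · intro m hm
      obtain ⟨h1, h2⟩ := mem_CFset.1 hm
      have hpSu : ∀ s, s ≤ t → pS (ext (fun l : Fin (t+1) => if l.val = t then m l + 1 else m l)) s
          = pS (ext m) s :=
        fun s hs => pS_congr (fun i hi => by rw [hext_inc m i, if_neg (by omega)])
      refine Finset.mem_filter.2 ⟨mem_CFset.2 ⟨?_, ?_⟩, ?_⟩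
      · intro j hj hj'
        rw [hpSu j (by omega)]
        calc pS (ext m) j ≤ pS (ext nm) j := h1 j hj hj'
          _ ≤ pS (ext n) j := hnm_le j
      · rw [pS_succ, pS_succ, hpSu t le_rfl, hext_inc m t, if_pos rfl]
        have e1 := hpSnm2 (t+1) (by omega) (by omega)
        rw [pS_succ, pS_succ] at e1 h2
        omega
      · rw [hpSu t le_rfl]
        have e1 := hpSnm2 t (by omega) (by omega)
        have e2 := h1 t (by omega) (by omega)
        omega
    · intro m hm
      dsimp only
      obtain ⟨hmC, hmP⟩ := Finset.mem_filter.1 hm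
      obtain ⟨h1, h2⟩ := mem_CFset.1 hmC
      have hmt : ext n t + 1 ≤ ext m t := by
        have := h1 t (by omega) (by omega)
        rw [pS_succ, pS_succ] at h2
        omega
      funext l
      by_cases h : l.val = t
      · simp only [if_pos h]
        have : 1 ≤ m l := by
          have := ext_apply m l
          rw [h] at this
          omega
        omega
      · simp only [if_neg h]
    · intro m hm
      dsimp only
      funext l
      by_cases h : l.val = t
      · simp only [if_pos h]
        omega
      · simp only [if_neg h]
  omega

end StepL

section StepR

def insF (t k : ℕ) (g : Fin t → ℕ) (a b : ℕ) : Fin (t+1) → ℕ := fun l =>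
  if l.val < k then ext g l.val else if l.val = k then a + 1
    else if l.val = k + 1 then b else ext g (l.val - 1)

def mrgF (t k : ℕ) (d : Fin (t+1) → ℕ) : Fin t → ℕ := fun l =>
  if l.val < k then ext d l.val else if l.val = k then (ext d k - 1) + ext d (k+1)
    else ext d (l.val + 1)

variable {t k : ℕ}

lemma ext_insF_lt {g : Fin t → ℕ} {a b l : ℕ} (hk : k < t) (h : l < k) :
    ext (insF t k g a b) l = ext g l := by
  rw [ext_lt _ (show l < t + 1 by omega)]
  dsimp only [insF]
  rw [if_pos h]

lemma ext_insF_k {g : Fin t → ℕ} {a b : ℕ} (hk : k < t) :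
    ext (insF t k g a b) k = a + 1 := by
  rw [ext_lt _ (show k < t + 1 by omega)]
  dsimp only [insF]
  rw [if_neg (by omega), if_pos rfl]

lemma ext_insF_k1 {g : Fin t → ℕ} {a b : ℕ} (hk : k < t) :
    ext (insF t k g a b) (k+1) = b := by
  rw [ext_lt _ (show k + 1 < t + 1 by omega)]
  dsimp only [insF]
  rw [if_neg (by omega), if_neg (by omega), if_pos rfl]

lemma ext_insF_hi {g : Fin t → ℕ} {a b l : ℕ} (h1 : k + 1 < l) (h2 : l ≤ t) :
    ext (insF t k g a b) l = ext g (l - 1) := by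
  rw [ext_lt _ (show l < t + 1 by omega)]
  dsimp only [insF]
  rw [if_neg (by omega), if_neg (by omega), if_neg (by omega)]

lemma ext_mrgF_lt {d : Fin (t+1) → ℕ} {l : ℕ} (hk : k < t) (h : l < k) :
    ext (mrgF t k d) l = ext d l := by
  rw [ext_lt _ (show l < t by omega)]
  dsimp only [mrgF]
  rw [if_pos h]

lemma ext_mrgF_k {d : Fin (t+1) → ℕ} (hk : k < t) :
    ext (mrgF t k d) k = (ext d k - 1) + ext d (k+1) := by
  rw [ext_lt _ hk]
  dsimp only [mrgF]
  rw [if_neg (by omega), if_pos rfl]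

lemma ext_mrgF_hi {d : Fin (t+1) → ℕ} {l : ℕ} (h1 : k < l) (h2 : l < t) :
    ext (mrgF t k d) l = ext d (l + 1) := by
  rw [ext_lt _ h2]
  dsimp only [mrgF]
  rw [if_neg (by omega), if_neg (by omega)]

lemma pS_insF_le {g : Fin t → ℕ} {a b s : ℕ} (hk : k < t) (hs : s ≤ k) :
    pS (ext (insF t k g a b)) s = pS (ext g) s :=
  pS_congr (fun i hi => ext_insF_lt hk (by omega))

lemma pS_insF_k1 {g : Fin t → ℕ} {a b : ℕ} (hk : k < t) :
    pS (ext (insF t k g a b)) (k+1) = pS (ext g) k + (a + 1) := by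
  rw [pS_succ, pS_insF_le hk le_rfl, ext_insF_k hk]

lemma pS_insF_hi {g : Fin t → ℕ} {a b : ℕ} (hk : k < t) (hab : a + b = ext g k) :
    ∀ s, k + 1 ≤ s → s ≤ t → pS (ext (insF t k g a b)) (s+1) = pS (ext g) s + 1 := by
  intro s hs
  induction s, hs using Nat.le_induction with
  | base =>
      intro _
      rw [pS_succ, pS_insF_k1 hk, ext_insF_k1 hk, pS_succ]
      omega
  | succ s hs ih =>
      intro h'
      rw [pS_succ, ih (by omega), ext_insF_hi (by omega) (by omega), pS_succ]
      have : s + 1 - 1 = s := by omega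
      rw [this]
      omega

lemma pS_mrgF_le {d : Fin (t+1) → ℕ} {s : ℕ} (hk : k < t) (hs : s ≤ k) :
    pS (ext (mrgF t k d)) s = pS (ext d) s :=
  pS_congr (fun i hi => ext_mrgF_lt hk (by omega))

lemma pS_mrgF_hi {d : Fin (t+1) → ℕ} (hk : k < t) (hd1 : 1 ≤ ext d k) :
    ∀ s, k + 1 ≤ s → s ≤ t → pS (ext (mrgF t k d)) s + 1 = pS (ext d) (s+1) := by
  intro s hs
  induction s, hs using Nat.le_induction with
  | base =>
      intro _
      rw [pS_succ, pS_mrgF_le hk le_rfl, ext_mrgF_k hk, pS_succ, pS_succ]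
      omega
  | succ s hs ih =>
      intro h'
      rw [pS_succ, ext_mrgF_hi (by omega) (by omega)]
      have := ih (by omega)
      rw [pS_succ (ext d) (s+1)]
      omega

end StepR

section StepRMain

variable {t k : ℕ}

lemma stepR (ht : 1 ≤ t) (n : Fin (t+1) → ℕ) (hk : k < t)
    (hnk : 1 ≤ ext n k) (hz : ∀ j, k < j → j < t → ext n j = 0) :
    ∑ d ∈ Dset (t+1), ∏ i, (n i + 1).choose (d i)
      = ∑ d ∈ Dset (t+1), ∏ i, ((fun l : Fin (t+1) => if l.val = k then n l - 1 else n l) i + 1).choose (d i)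
        + ∑ g ∈ Dset t, ∏ i, (ext n i.val + 1).choose (g i) := by
  set nm : Fin (t+1) → ℕ := fun l => if l.val = k then n l - 1 else n l with hnm
  set n' : Fin t → ℕ := fun l => ext n l.val with hn'
  have hextnm : ∀ l, ext nm l = if l = k then ext n l - 1 else ext n l := by
    intro l
    rcases Nat.lt_or_ge l (t+1) with h | h
    · rw [ext_lt nm h, ext_lt n h, hnm]
    · rw [ext_ge nm h, ext_ge n h]
      simp
  have hextn' : ∀ l, l < t → ext n' l = ext n l := by
    intro l h
    rw [ext_lt n' h]
  simp only [W_eq]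
  -- Step R1 : Pascal split
  have hkmem : k ∈ Finset.range (t+1) := Finset.mem_range.2 (by omega)
  have key1 : ∀ d ∈ Dset (t+1),
      ∏ l ∈ Finset.range (t+1), (ext n l + 1).choose (ext d l)
        = ∏ l ∈ Finset.range (t+1), (ext nm l + 1).choose (ext d l)
          + (if 1 ≤ ext d k then
              (ext n k).choose (ext d k - 1)
                * ∏ l ∈ (Finset.range (t+1)).erase k, (ext n l + 1).choose (ext d l)
            else 0) := by
    intro d _
    rw [← Finset.mul_prod_erase _ (fun l => (ext n l + 1).choose (ext d l)) hkmem,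
      ← Finset.mul_prod_erase _ (fun l => (ext nm l + 1).choose (ext d l)) hkmem]
    have herase : ∏ l ∈ (Finset.range (t+1)).erase k, (ext nm l + 1).choose (ext d l)
        = ∏ l ∈ (Finset.range (t+1)).erase k, (ext n l + 1).choose (ext d l) :=
      Finset.prod_congr rfl (fun l hl => by
        rw [hextnm l, if_neg (Finset.mem_erase.1 hl).1])
    rw [herase]
    rcases Nat.eq_zero_or_pos (ext d k) with h0 | h1
    · rw [h0, if_neg (by omega)]
      simp
    · rw [if_pos (show (1:ℕ) ≤ ext d k by omega)]
      obtain ⟨e, he⟩ : ∃ e, ext d k = e + 1 := ⟨ext d k - 1, by omega⟩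
      rw [he, hextnm k, if_pos rfl]
      rw [Nat.sub_add_cancel hnk]
      have hsimp : e + 1 - 1 = e := by omega
      rw [hsimp, Nat.choose_succ_succ]
      ring
  rw [Finset.sum_congr rfl key1, Finset.sum_add_distrib]
  congr 1
  rw [← Finset.sum_filter]
  -- Step R2 : bijection with sigma type
  have hRHS : ∑ g ∈ Dset t, ∏ l ∈ Finset.range t, (ext n' l + 1).choose (ext g l)
      = ∑ x ∈ (Dset t).sigma (fun g => Finset.HasAntidiagonal.antidiagonal (ext g k)),
          (ext n k).choose x.2.1 * Nat.choose 1 x.2.2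
            * ∏ l ∈ (Finset.range t).erase k, (ext n' l + 1).choose (ext x.1 l) := by
    rw [Finset.sum_sigma]
    apply Finset.sum_congr rfl
    intro g hg
    dsimp only
    rw [← Finset.mul_prod_erase _ (fun l => (ext n' l + 1).choose (ext g l))
      (Finset.mem_range.2 hk), hextn' k hk, Nat.add_choose_eq, Finset.sum_mul]
  rw [hRHS]
  -- the weighted bijection
  have hfz : ∀ d ∈ Dset (t+1), ext d t = 0 := by
    intro d hd
    have := Dset_last (r := t+1) (by omega) hd
    simpa using this
  have hfz' : ∀ g ∈ Dset t, ext g (t-1) = 0 := fun g hg => Dset_last ht hg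
  apply Finset.sum_bij'
    (i := fun d _ => (⟨mrgF t k d, (ext d k - 1, ext d (k+1))⟩ :
        Σ _ : Fin t → ℕ, ℕ × ℕ))
    (j := fun x _ => insF t k x.1 x.2.1 x.2.2)
  -- membership forward
  · intro d hd
    obtain ⟨hdD, hd1⟩ := Finset.mem_filter.1 hd
    obtain ⟨h1, h2⟩ := mem_Dset.1 hdD
    refine Finset.mem_sigma.2 ⟨?_, ?_⟩
    · dsimp only
      rw [mem_Dset]
      constructor
      · intro i hi hi'
        rcases Nat.lt_or_ge k i with hki | hki
        · have e1 := pS_mrgF_hi hk hd1 i (by omega) (by omega)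
          have := h1 (i+1) (by omega) (by omega)
          omega
        · rw [pS_mrgF_le hk hki]
          exact h1 i hi (by omega)
      · have e1 := pS_mrgF_hi hk hd1 t (by omega) le_rfl
        have h2' : pS (ext d) (t+1) = t := by
          rw [h2]; omega
        omega
    · dsimp only
      rw [Finset.HasAntidiagonal.mem_antidiagonal]
      exact (ext_mrgF_k hk).symm
  -- membership backward
  · intro x hx
    obtain ⟨hgD, hab⟩ := Finset.mem_sigma.1 hx
    obtain ⟨h1, h2⟩ := mem_Dset.1 hgD
    rw [Finset.HasAntidiagonal.mem_antidiagonal] at hab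
    refine Finset.mem_filter.2 ⟨?_, ?_⟩
    · rw [mem_Dset]
      constructor
      · intro i hi hi'
        rcases Nat.lt_or_ge k i with hki | hki
        · rcases Nat.eq_or_lt_of_le hki with hki' | hki'
          · -- i = k + 1
            rw [← hki', pS_insF_k1 hk]
            rcases Nat.eq_zero_or_pos k with hk0 | hk0
            · rw [hk0, pS_zero]
              omega
            · have := h1 k (by omega) (by omega)
              omega
          · -- i ≥ k + 2
            obtain ⟨s, rfl⟩ : ∃ s, i = s + 1 := ⟨i - 1, by omega⟩
            rw [pS_insF_hi hk hab s (by omega) (by omega)]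
            have := h1 s (by omega) (by omega)
            omega
        · rw [pS_insF_le hk hki]
          exact h1 i hi (by omega)
      · have e1 := pS_insF_hi hk hab t (by omega) le_rfl
        have hsimp : t + 1 - 1 = t := by omega
        rw [hsimp, e1, h2]
        omega
    · rw [ext_insF_k hk]
      omega
  -- left inverse
  · intro d hd
    obtain ⟨hdD, hd1⟩ := Finset.mem_filter.1 hd
    funext l
    dsimp only [insF]
    by_cases hlk : l.val < k
    · rw [if_pos hlk, ext_mrgF_lt hk hlk, ext_apply]
    · rw [if_neg hlk]
      by_cases hlek : l.val = k
      · rw [if_pos hlek]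
        have := ext_apply d l
        rw [hlek] at this
        omega
      · rw [if_neg hlek]
        by_cases hlk1 : l.val = k + 1
        · rw [if_pos hlk1]
          have := ext_apply d l
          rw [hlk1] at this
          omega
        · rw [if_neg hlk1]
          have hgt : k + 1 < l.val := by omega
          have hle : l.val ≤ t := by omega
          rw [ext_mrgF_hi (show k < l.val - 1 by omega) (show l.val - 1 < t by omega)]
          have hsimp : l.val - 1 + 1 = l.val := by omega
          rw [hsimp, ext_apply]
  -- right inverse
  · intro x hx
    obtain ⟨hgD, hab⟩ := Finset.mem_sigma.1 hx
    rw [Finset.HasAntidiagonal.mem_antidiagonal] at hab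
    obtain ⟨g, a, b⟩ := x
    dsimp only at hab ⊢
    have h1 : mrgF t k (insF t k g a b) = g := by
      funext l
      dsimp only [mrgF]
      by_cases hlk : l.val < k
      · rw [if_pos hlk, ext_insF_lt hk hlk, ext_apply]
      · rw [if_neg hlk]
        by_cases hlek : l.val = k
        · rw [if_pos hlek, ext_insF_k hk, ext_insF_k1 hk]
          have := ext_apply g l
          rw [hlek] at this
          omega
        · rw [if_neg hlek]
          rw [ext_insF_hi (show k + 1 < l.val + 1 by omega) (show l.val + 1 ≤ t by omega)]
          have hsimp : l.val + 1 - 1 = l.val := by omega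
          rw [hsimp, ext_apply]
    have h2 : ext (insF t k g a b) k - 1 = a := by rw [ext_insF_k hk]; omega
    have h3 : ext (insF t k g a b) (k+1) = b := ext_insF_k1 hk
    have h4 : (ext (insF t k g a b) k - 1, ext (insF t k g a b) (k+1)) = (a, b) := by
      rw [h2, h3]
    exact Sigma.ext h1 (heq_of_eq (by rw [h4]))
  -- weights
  · intro d hd
    obtain ⟨hdD, hd1⟩ := Finset.mem_filter.1 hd
    have hdt : ext d t = 0 := hfz d hdD
    dsimp only
    have hk1mem : k + 1 ∈ (Finset.range (t+1)).erase k :=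
      Finset.mem_erase.2 ⟨by omega, Finset.mem_range.2 (by omega)⟩
    rw [← Finset.mul_prod_erase _ (fun l => (ext n l + 1).choose (ext d l)) hk1mem]
    have claim1 : (ext n (k+1) + 1).choose (ext d (k+1)) = Nat.choose 1 (ext d (k+1)) := by
      rcases Nat.lt_or_ge (k+1) t with h | h
      · rw [hz (k+1) (by omega) h]
      · have hkt : k + 1 = t := by omega
        rw [hkt, hdt]
        simp
    have claim2 : ∏ l ∈ ((Finset.range (t+1)).erase k).erase (k+1),
          (ext n l + 1).choose (ext d l)
        = ∏ l ∈ (Finset.range t).erase k, (ext n' l + 1).choose (ext (mrgF t k d) l) := by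
      apply Finset.prod_nbij' (i := fun l => if l < k then l else l - 1)
        (j := fun l => if l < k then l else l + 1)
      · intro l hl
        simp only [Finset.mem_erase, Finset.mem_range] at hl ⊢
        split_ifs <;> omega
      · intro l hl
        simp only [Finset.mem_erase, Finset.mem_range] at hl ⊢
        split_ifs <;> omega
      · intro l hl
        simp only [Finset.mem_erase, Finset.mem_range] at hl
        split_ifs <;> omega
      · intro l hl
        simp only [Finset.mem_erase, Finset.mem_range] at hl
        split_ifs <;> omega
      · intro l hl
        simp only [Finset.mem_erase, Finset.mem_range] at hl
        by_cases h : l < k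
        · rw [if_pos h, hextn' l (by omega), ext_mrgF_lt hk h]
        · rw [if_neg h]
          have hl2 : k + 2 ≤ l := by omega
          have hlt : l ≤ t := by omega
          rw [ext_mrgF_hi (show k < l - 1 by omega) (show l - 1 < t by omega)]
          have hsimp : l - 1 + 1 = l := by omega
          rw [hsimp, hextn' (l-1) (by omega)]
          rcases Nat.lt_or_ge l t with hlt2 | hlt2
          · rw [hz l (by omega) hlt2, hz (l-1) (by omega) (by omega)]
          · have hlt3 : l = t := by omega
            have hnl1 : ext n (l - 1) = 0 := hz (l-1) (by omega) (by omega)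
            rw [hnl1, hlt3, hdt]
            simp
    rw [claim1, claim2]
    ring
end StepRMain

section Key

lemma pS_nm {t k : ℕ} (hk : k < t) (n : Fin (t+1) → ℕ) (hnk : 1 ≤ ext n k) :
    ∀ s, k + 1 ≤ s → s ≤ t + 1 →
      pS (ext (fun l : Fin (t+1) => if l.val = k then n l - 1 else n l)) s + 1
        = pS (ext n) s := by
  set nm : Fin (t+1) → ℕ := fun l => if l.val = k then n l - 1 else n l with hnm
  have hextnm : ∀ l, ext nm l = if l = k then ext n l - 1 else ext n l := by
    intro l
    rcases Nat.lt_or_ge l (t+1) with h | h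
    · rw [ext_lt nm h, ext_lt n h, hnm]
    · rw [ext_ge nm h, ext_ge n h]
      simp
  have hpSnm : ∀ s, s ≤ k → pS (ext nm) s = pS (ext n) s := by
    intro s hs
    exact pS_congr (fun i hi => by rw [hextnm i, if_neg (by omega)])
  intro s hs
  induction s, hs using Nat.le_induction with
  | base =>
      intro _
      rw [pS_succ, pS_succ, hpSnm k le_rfl, hextnm k, if_pos rfl]
      omega
  | succ s hs ih =>
      intro h'
      rw [pS_succ, pS_succ, hextnm s, if_neg (by omega)]
      have := ih (by omega)
      omega

lemma key : ∀ (B r : ℕ) (n : Fin r → ℕ), 1 ≤ r → r + pS (ext n) (r-1) ≤ B →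
    (CFset r n).card = ∑ d ∈ Dset r, ∏ i, (n i + 1).choose (d i) := by
  intro B
  induction B with
  | zero => intro r n hr hB; omega
  | succ B ih =>
      intro r n hr hB
      obtain ⟨t, rfl⟩ : ∃ t, r = t + 1 := ⟨r - 1, by omega⟩
      by_cases hz : ∀ j, j < t → ext n j = 0
      · rw [card_CFset_allzero n hz, sum_Dset_allzero n hz]
      · push_neg at hz
        obtain ⟨j0, hj0, hj0'⟩ := hz
        have ht : 1 ≤ t := by omega
        set k := Nat.findGreatest (fun j => 1 ≤ ext n j) (t-1) with hkdef
        have hPk : 1 ≤ ext n k := by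
          rw [hkdef]
          exact Nat.findGreatest_spec (P := fun j => 1 ≤ ext n j) (n := t-1) (m := j0)
            (by omega) (by omega)
        have hk : k < t := by
          have := Nat.findGreatest_le (P := fun j => 1 ≤ ext n j) (t-1)
          omega
        have hzk : ∀ j, k < j → j < t → ext n j = 0 := by
          intro j h1 h2
          have := Nat.findGreatest_is_greatest (P := fun j => 1 ≤ ext n j)
            (k := j) h1 (by omega)
          omega
        have hmeas : t + 1 + pS (ext n) t ≤ B + 1 := hB
        have hdec' : pS (ext (fun l : Fin (t+1) => if l.val = k then n l - 1 else n l)) t + 1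
            = pS (ext n) t := pS_nm hk n hPk t (by omega) (by omega)
        have hm1 : t + 1 + pS (ext (fun l : Fin (t+1) => if l.val = k then n l - 1 else n l))
            (t + 1 - 1) ≤ B := by
          have h' : pS (ext (fun l : Fin (t+1) => if l.val = k then n l - 1 else n l))
              (t + 1 - 1) + 1 = pS (ext n) t := hdec'
          omega
        have hagr : pS (ext (fun l : Fin t => ext n l.val)) (t-1) = pS (ext n) (t-1) :=
          pS_congr (fun i hi => by rw [ext_lt _ (show i < t by omega)])
        have hm2 : t + pS (ext (fun l : Fin t => ext n l.val)) (t - 1) ≤ B := by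
          have hmono : pS (ext n) (t-1) ≤ pS (ext n) t := pS_mono _ (by omega)
          omega
        have e1 := ih (t+1) (fun l : Fin (t+1) => if l.val = k then n l - 1 else n l)
          (by omega) hm1
        have e2 := ih t (fun l : Fin t => ext n l.val) ht hm2
        rw [stepL ht n hk hPk hzk, stepR ht n hk hPk hzk, e1, e2]

end Key

end Stmt17

/-- `|CF(n)| = Σ_{d ∈ D_r} Π_i C(n_i + 1, d_i)`. -/
theorem stmt17 (r : ℕ) (hr : 1 ≤ r) (n : Fin r → ℕ) (hn : ∀ i, 1 ≤ n i) :
    Nat.card {m : Fin r → ℕ | InCF n m} =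
      ∑ᶠ d ∈ {d : Fin r → ℕ | IsCatalanSeq r d}, ∏ i, (n i + 1).choose (d i) := by
  have h1 : {m : Fin r → ℕ | InCF n m} = ↑(Stmt17.CFset r n) := by
    ext m
    simp [Stmt17.mem_CFset_iff_InCF]
  have h2 : {d : Fin r → ℕ | IsCatalanSeq r d} = ↑(Stmt17.Dset r) := by
    ext d
    simp [Stmt17.mem_Dset_iff_Cat]
  rw [h1, h2, finsum_mem_coe_finset, Nat.card_coe_set_eq, Set.ncard_coe_finset]
  exact Stmt17.key (r + Stmt17.pS (Stmt17.ext n) (r-1)) r n hr le_rfl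
end

section
/- Let r ≥ 1 and let n = (n_1,…,n_r) and n' = (n'_1,…,n'_r) be r-tuples of positive integers such that n'_1+⋯+n'_j ≥ n_1+⋯+n_j for all 1 ≤ j ≤ r (i.e., n' dominates n). Then |CF(n)| ≤ |CF(n')|. -/
/-- If `n'` dominates `n`, then `|CF(n)| ≤ |CF(n')|`. -/
theorem stmt18 (r : ℕ) (hr : 1 ≤ r) (n n' : Fin r → ℕ)
    (hn : ∀ i, 1 ≤ n i) (hn' : ∀ i, 1 ≤ n' i)
    (hdom : ∀ j : ℕ, 1 ≤ j → j ≤ r → prefSum n j ≤ prefSum n' j) :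
    Nat.card {m : Fin r → ℕ | InCF n m} ≤ Nat.card {m : Fin r → ℕ | InCF n' m} := by
  classical
  have hfull : ∀ f : Fin r → ℕ, prefSum f r = ∑ i, f i := by
    intro f
    unfold prefSum
    rw [Finset.filter_true_of_mem (fun i _ => i.isLt)]
  have hSS' : ∑ i, n i ≤ ∑ i, n' i := by
    have := hdom r hr le_rfl
    rwa [hfull, hfull] at this
  set D := ∑ i, n' i - ∑ i, n i with hD
  set k : Fin r := ⟨r - 1, Nat.sub_lt hr Nat.one_pos⟩ with hk
  set F : (Fin r → ℕ) → (Fin r → ℕ) := fun m i => m i + (if i = k then D else 0) with hF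
  have hFinj : Function.Injective F := by
    intro a b hab
    funext i
    have h := congrFun hab i
    simp only [hF] at h
    by_cases hik : i = k
    · subst hik; simpa using h
    · simpa [hik] using h
  have hmem : ∀ m, InCF n m → InCF n' (F m) := by
    intro m hm
    constructor
    · intro j hj1 hj2
      have hpre : prefSum (F m) j = prefSum m j := by
        unfold prefSum
        apply Finset.sum_congr rfl
        intro i hi
        simp only [Finset.mem_filter] at hi
        have hik : i ≠ k := by
          intro h
          have : (i : ℕ) = r - 1 := by rw [h]
          omega
        simp [hF, hik]
      rw [hpre]
      exact le_trans (hm.1 j hj1 hj2) (hdom j hj1 (le_trans hj2 (Nat.sub_le r 1)))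
    · have hsum : ∑ i, F m i = ∑ i, m i + D := by
        simp only [hF]
        rw [Finset.sum_add_distrib, Finset.sum_ite_eq' Finset.univ k (fun _ => D)]
        simp
      rw [hsum, hm.2]
      omega
  have hfin : (Set.Finite {m : Fin r → ℕ | InCF n' m}) := by
    apply Set.Finite.subset (Set.finite_Icc (fun _ : Fin r => 0) (fun _ => ∑ i, n' i))
    intro m hm
    constructor
    · intro i; exact Nat.zero_le _
    · intro i
      calc m i ≤ ∑ j, m j :=
            Finset.single_le_sum (fun j _ => Nat.zero_le _) (Finset.mem_univ i)
        _ = ∑ j, n' j := hm.2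
  haveI : Finite {m : Fin r → ℕ | InCF n' m} := hfin
  exact Nat.card_le_card_of_injective
    (fun x => (⟨F x.1, hmem x.1 x.2⟩ : {m : Fin r → ℕ | InCF n' m}))
    (fun a b hab => Subtype.ext (hFinj (congrArg Subtype.val hab)))
end
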